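/- arXiv:1811.03185 — 3 statements merged into one kernel-verified Lean document; each statement's English description precedes it below -/
import Mathlib

section
/- Let A be a finite alphabet, let Z be a maximal bifix code of A* with finite degree d(Z), and let F ⊆ A* be a recurrent set. Then the intersection X = Z ∩ F is an F-maximal bifix code; one has d_F(X) ≤ d(Z), with equality if Z is finite; and if F is moreover uniformly recurrent, then X is a finite set. -/
/-! Common definitions: words over a finite alphabet `A` are terms of `List A`,
concatenation being the monoid operation of the free monoid `A*`. -/

namespace PaperDefs

variable {A : Type*}

/-- `w` belongs to the Kleene star `X*` of `X`: it is a (possibly empty)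
concatenation of elements of `X`. -/
def InStar (X : Set (List A)) (w : List A) : Prop :=
  ∃ l : List (List A), (∀ u ∈ l, u ∈ X) ∧ l.flatten = w

/-- The language `X*`. -/
def star (X : Set (List A)) : Set (List A) := {w | InStar X w}

/-- A prefix code: a nonempty set of nonempty words, none of which is a proper
prefix of another. -/
def IsPrefixCode (X : Set (List A)) : Prop :=
  X.Nonempty ∧ (∀ w ∈ X, w ≠ []) ∧ ∀ u ∈ X, ∀ v ∈ X, u <+: v → u = v

/-- A suffix code. -/
def IsSuffixCode (X : Set (List A)) : Prop :=
  X.Nonempty ∧ (∀ w ∈ X, w ≠ []) ∧ ∀ u ∈ X, ∀ v ∈ X, u <:+ v → u = v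

/-- A bifix code. -/
def IsBifixCode (X : Set (List A)) : Prop := IsPrefixCode X ∧ IsSuffixCode X

/-- A factorial set contains all factors of its elements. -/
def Factorial (F : Set (List A)) : Prop := ∀ w ∈ F, ∀ u, u <:+: w → u ∈ F

/-- A recurrent set. -/
def Recurrent (F : Set (List A)) : Prop :=
  Factorial F ∧ F.Nonempty ∧ F ≠ {[]} ∧ ∀ u ∈ F, ∀ v ∈ F, ∃ w, u ++ w ++ v ∈ F

/-- A uniformly recurrent set. -/
def UniformlyRecurrent (F : Set (List A)) : Prop :=
  Recurrent F ∧ ∀ u ∈ F, ∃ n : ℕ, ∀ w ∈ F, n ≤ w.length → u <:+: w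

/-- A parse of `w` with respect to `X` : a triple `(v, x, u)` with `w = v x u`,
`v` has no suffix in `X`, `x ∈ X*`, and `u` has no prefix in `X`. -/
def IsParse (X : Set (List A)) (w : List A) (p : List A × List A × List A) : Prop :=
  p.1 ++ p.2.1 ++ p.2.2 = w ∧ (¬ ∃ s ∈ X, s <:+ p.1) ∧ InStar X p.2.1 ∧
    ¬ ∃ s ∈ X, s <+: p.2.2

/-- `δ_X(w)`, the number of parses of `w` with respect to `X`. -/
noncomputable def delta (X : Set (List A)) (w : List A) : ℕ :=
  {p | IsParse X w p}.ncard

/-- The `F`-degree `d_F(X)` of `X`, as an extended natural number. -/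
noncomputable def Fdeg (X F : Set (List A)) : ℕ∞ :=
  ⨆ w ∈ F, (delta X w : ℕ∞)

/-- The degree `d(X)` of `X`. -/
noncomputable def deg (X : Set (List A)) : ℕ∞ := Fdeg X Set.univ

/-- An `F`-maximal bifix code. -/
def IsFMaximalBifixCode (F X : Set (List A)) : Prop :=
  IsBifixCode X ∧ X ⊆ F ∧ ∀ Y : Set (List A), IsBifixCode Y → Y ⊆ F → X ⊆ Y → Y = X

/-- An `F`-maximal prefix code. -/
def IsFMaximalPrefixCode (F X : Set (List A)) : Prop :=
  IsPrefixCode X ∧ X ⊆ F ∧ ∀ Y : Set (List A), IsPrefixCode Y → Y ⊆ F → X ⊆ Y → Y = X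

/-- `X` is `F`-thin: some word of `F` is not a factor of any element of `X`. -/
def FThin (F X : Set (List A)) : Prop := ∃ w ∈ F, ∀ x ∈ X, ¬ w <:+: x

/-- A rational (regular) language. -/
def IsRational (L : Set (List A)) : Prop :=
  ∃ (σ : Type) (_ : Fintype σ) (M : DFA A σ), ∀ w : List A, w ∈ M.accepts ↔ w ∈ L

/-- The syntactic congruence of the language `L`. -/
def SynEquiv (L : Set (List A)) (u v : List A) : Prop :=
  ∀ x y : List A, x ++ u ++ y ∈ L ↔ x ++ v ++ y ∈ L

/-- `η : A* → M` is (a realization of) the syntactic homomorphism onto the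
syntactic monoid of `L`. -/
structure IsSyntacticHom (L : Set (List A)) {M : Type*} [Monoid M] (η : List A → M) : Prop where
  map_nil : η [] = 1
  map_append : ∀ u v : List A, η (u ++ v) = η u * η v
  surj : Function.Surjective η
  syn : ∀ u v : List A, η u = η v ↔ SynEquiv L u v

section Green

variable {M : Type*} [Monoid M]

/-- The `J`-order: `MuM ⊆ MvM`. -/
def JLe (u v : M) : Prop := ∃ x y, u = x * v * y

/-- Green's relation `J`. -/
def JEquiv (u v : M) : Prop := JLe u v ∧ JLe v u

/-- Green's relation `R`. -/
def REquiv (u v : M) : Prop := (∃ x, v = u * x) ∧ (∃ x, u = v * x)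

/-- Green's relation `L`. -/
def LEquiv (u v : M) : Prop := (∃ x, v = x * u) ∧ (∃ x, u = x * v)

/-- Green's relation `H`. -/
def HEquiv (u v : M) : Prop := REquiv u v ∧ LEquiv u v

/-- Green's relation `D`. -/
def DEquiv (u v : M) : Prop := ∃ s, REquiv u s ∧ LEquiv s v

/-- The `H`-class of an element. -/
def HClass (e : M) : Set M := {m | HEquiv m e}

/-- Membership in the minimum ideal (minimum `J`-class) of `M`. -/
def InMinIdeal (m : M) : Prop := ∀ n : M, JLe m n

/-- `S` is a subgroup of the monoid `M`: a subsemigroup which is a group. -/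
def IsSubgroupIn (S : Set M) : Prop :=
  S.Nonempty ∧ (∀ x ∈ S, ∀ y ∈ S, x * y ∈ S) ∧
    ∃ e ∈ S, (∀ x ∈ S, e * x = x ∧ x * e = x) ∧ ∀ x ∈ S, ∃ y ∈ S, x * y = e ∧ y * x = e

/-- The subsets `S ⊆ M` and `T ⊆ N` (each closed under multiplication, e.g.
maximal subgroups) are isomorphic as groups: there is a multiplicative
bijection from `S` onto `T`. -/
def GroupIsoOn {N : Type*} [Monoid N] (S : Set M) (T : Set N) : Prop :=
  ∃ φ : M → N, Set.BijOn φ S T ∧ ∀ x ∈ S, ∀ y ∈ S, φ (x * y) = φ x * φ y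

end Green

/-- `m` belongs to `J_F(X)`, the minimum `J`-class of the syntactic monoid of
`X*` meeting the image of `F` under the syntactic homomorphism `η`. -/
def InFMinJ {M : Type*} [Monoid M] (η : List A → M) (F : Set (List A)) (m : M) : Prop :=
  (∃ w ∈ F, JEquiv m (η w)) ∧ ∀ w ∈ F, JLe m (η w)

/-- A group code: a prefix code `Z` defined by a transitive permutation
representation of `A*` on a finite set, `Z*` being the stabilizer of a point. -/
def IsGroupCode (Z : Set (List A)) : Prop :=
  IsPrefixCode Z ∧
  ∃ (Q : Type) (_ : Fintype Q) (q₀ : Q) (α : List A → Equiv.Perm Q),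
    α [] = 1 ∧ (∀ u v : List A, α (u ++ v) = α u * α v) ∧
    (∀ q q' : Q, ∃ w : List A, α w q = q') ∧
    (∀ w : List A, InStar Z w ↔ α w q₀ = q₀) ∧
    Z = {w : List A | α w q₀ = q₀ ∧ w ≠ [] ∧
          ¬ ∃ u v : List A, u ≠ [] ∧ v ≠ [] ∧ α u q₀ = q₀ ∧ α v q₀ = q₀ ∧ w = u ++ v}

/-- Vertices of the extension graph of `w` in `F`: the disjoint union of
`L(w)` and `R(w)`. -/
def ExtVertex (F : Set (List A)) (w : List A) : Sum A A → Prop :=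
  fun x => Sum.elim (fun a => a :: w ∈ F) (fun b => w ++ [b] ∈ F) x

/-- The edge relation of the extension graph of `w` in `F`. -/
def ExtRel (F : Set (List A)) (w : List A) : Sum A A → Sum A A → Prop :=
  fun x y =>
    match x, y with
    | Sum.inl a, Sum.inr b => a :: (w ++ [b]) ∈ F
    | _, _ => False

/-- The extension graph `G(w)` of `w` in `F`. -/
def extGraph (F : Set (List A)) (w : List A) :
    SimpleGraph {x : Sum A A // ExtVertex F w x} :=
  SimpleGraph.fromRel fun x y => ExtRel F w x.1 y.1

/-- `F` is connected: every extension graph of a word of `F` is connected. -/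
def ConnectedSet (F : Set (List A)) : Prop :=
  ∀ w ∈ F, (extGraph F w).Connected

/-- `F` is a tree set: every extension graph of a word of `F` is a tree. -/
def TreeSet (F : Set (List A)) : Prop :=
  ∀ w ∈ F, (extGraph F w).IsTree

/-- The alphabet of `F` is the whole of `A`. -/
def AlphabetIs (F : Set (List A)) : Prop := ∀ a : A, [a] ∈ F

/-- The left quotient `u⁻¹L`, i.e. the state reached from the initial state of
the minimal automaton of `L` by reading `u`. -/
def leftQuot (L : Set (List A)) (u : List A) : Set (List A) := {w | u ++ w ∈ L}

/-- The set of states of the minimal automaton of `L`: the nonempty left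
quotients of `L`. -/
def MinStates (L : Set (List A)) : Set (Set (List A)) :=
  {q | q.Nonempty ∧ ∃ u : List A, q = leftQuot L u}

/-- The (partial) transition of the minimal automaton: `q · v`; it is defined
when the resulting set is nonempty. -/
def stepW (q : Set (List A)) (v : List A) : Set (List A) := {w | v ++ w ∈ q}

/-- The rank of the word `v` in the minimal automaton of `L`: the number of
distinct states `q · v` with `q` a state such that `q · v` is defined. -/
noncomputable def wordRank (L : Set (List A)) (v : List A) : ℕ :=
  ((fun q => stepW q v) '' {q ∈ MinStates L | (stepW q v).Nonempty}).ncard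

/-- The set of first return words of `F` to `u`. -/
def ReturnWords (F : Set (List A)) (u : List A) : Set (List A) :=
  {v | v ≠ [] ∧ u ++ v ∈ F ∧ u <:+ u ++ v ∧
    ¬ ∃ x y : List A, x ≠ [] ∧ y ≠ [] ∧ u ++ v = x ++ u ++ y}

/-- A code: every word has at most one factorization into elements of `X`. -/
def IsCode (X : Set (List A)) : Prop :=
  ∀ l m : List (List A), (∀ u ∈ l, u ∈ X) → (∀ u ∈ m, u ∈ X) →
    l.flatten = m.flatten → l = m

/-- The set `I = Q_X · K` of images of states of the minimal automaton of `L`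
under (partial) transitions by words whose syntactic image lies in `K`. -/
def ImageSet (L : Set (List A)) {M : Type*} [Monoid M] (η : List A → M) (K : Set M) :
    Set (Set (List A)) :=
  {p | ∃ q ∈ MinStates L, ∃ v : List A, η v ∈ K ∧ (stepW q v).Nonempty ∧ p = stepW q v}

/-- A witness for "a finite monoid `M` together with a monoid homomorphism
`A* → M`". -/
structure FiniteMonoidHomWitness (A : Type*) where
  M : Type
  [fin : Fintype M]
  [mon : Monoid M]
  φ : List A → M
  map_nil : φ [] = 1
  map_append : ∀ u v : List A, φ (u ++ v) = φ u * φ v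

end PaperDefs

namespace Aux
open PaperDefs
variable {A : Type*}

def NoSuf (Z : Set (List A)) (v : List A) : Prop := ¬ ∃ s ∈ Z, s <:+ v
def NoPre (Z : Set (List A)) (u : List A) : Prop := ¬ ∃ s ∈ Z, s <+: u
def GP (Z : Set (List A)) (w : List A) : Set (List A) := {v | v <+: w ∧ NoSuf Z v}
def GS (Z : Set (List A)) (w : List A) : Set (List A) := {u | u <:+ w ∧ NoPre Z u}

/-- a set of nonempty words -/
def NE (Z : Set (List A)) : Prop := ∀ z ∈ Z, z ≠ []

lemma noPre_nil {Z : Set (List A)} (h : NE Z) : NoPre Z [] := by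
  rintro ⟨s, hs, hp⟩
  exact h s hs (List.prefix_nil.mp hp)

lemma noSuf_nil {Z : Set (List A)} (h : NE Z) : NoSuf Z [] := by
  rintro ⟨s, hs, hp⟩
  exact h s hs (List.suffix_nil.mp hp)

lemma prefixes_finite (w : List A) : {v | v <+: w}.Finite := by
  have : {v | v <+: w} ⊆ (fun n => w.take n) '' Set.Iic w.length := by
    rintro v ⟨t, rfl⟩
    exact ⟨v.length, by simp, by simp⟩
  exact ((Set.finite_Iic _).image _).subset this

lemma suffixes_finite (w : List A) : {v | v <:+ w}.Finite := by
  have : {v | v <:+ w} ⊆ (fun n => w.drop n) '' Set.Iic w.length := by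
    rintro v ⟨t, rfl⟩
    exact ⟨t.length, by simp, by simp⟩
  exact ((Set.finite_Iic _).image _).subset this

lemma GP_finite (Z : Set (List A)) (w : List A) : (GP Z w).Finite :=
  (prefixes_finite w).subset (fun v hv => hv.1)

lemma GS_finite (Z : Set (List A)) (w : List A) : (GS Z w).Finite :=
  (suffixes_finite w).subset (fun v hv => hv.1)

/-- Left strip: existence (auxiliary, bounded). -/
lemma leftStrip_exists_aux {Z : Set (List A)} (hne : NE Z) :
    ∀ n (r : List A), r.length ≤ n →
      ∃ (l : List (List A)) (u : List A),
        (∀ z ∈ l, z ∈ Z) ∧ l.flatten ++ u = r ∧ NoPre Z u := by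
  intro n
  induction n with
  | zero =>
    intro r hr
    have : r = [] := List.eq_nil_of_length_eq_zero (Nat.le_zero.mp hr)
    subst this
    exact ⟨[], [], by simp, by simp, noPre_nil hne⟩
  | succ n ih =>
    intro r hr
    by_cases h : ∃ z ∈ Z, z <+: r
    · obtain ⟨z, hz, t, rfl⟩ := h
      have hzl : 1 ≤ z.length := List.length_pos_iff.mpr (hne z hz)
      have ht : t.length ≤ n := by
        have := List.length_append (as := z) (bs := t)
        omega
      obtain ⟨l, u, h1, h2, h3⟩ := ih t ht
      refine ⟨z :: l, u, ?_, by simp [List.append_assoc, h2], h3⟩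
      intro x hx
      rcases List.mem_cons.mp hx with rfl | hx
      · exact hz
      · exact h1 x hx
    · exact ⟨[], r, by simp, by simp, h⟩

lemma leftStrip_exists {Z : Set (List A)} (hne : NE Z) (r : List A) :
    ∃ (l : List (List A)) (u : List A),
      (∀ z ∈ l, z ∈ Z) ∧ l.flatten ++ u = r ∧ NoPre Z u :=
  leftStrip_exists_aux hne r.length r le_rfl

/-- Right strip: existence. -/
lemma rightStrip_exists_aux {Z : Set (List A)} (hne : NE Z) :
    ∀ n (r : List A), r.length ≤ n →
      ∃ (v : List A) (l : List (List A)),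
        (∀ z ∈ l, z ∈ Z) ∧ v ++ l.flatten = r ∧ NoSuf Z v := by
  intro n
  induction n with
  | zero =>
    intro r hr
    have : r = [] := List.eq_nil_of_length_eq_zero (Nat.le_zero.mp hr)
    subst this
    exact ⟨[], [], by simp, by simp, noSuf_nil hne⟩
  | succ n ih =>
    intro r hr
    by_cases h : ∃ z ∈ Z, z <:+ r
    · obtain ⟨z, hz, t, rfl⟩ := h
      have hzl : 1 ≤ z.length := List.length_pos_iff.mpr (hne z hz)
      have ht : t.length ≤ n := by
        have := List.length_append (as := t) (bs := z)
        omega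
      obtain ⟨v, l, h1, h2, h3⟩ := ih t ht
      refine ⟨v, l ++ [z], ?_, by simp [← List.append_assoc, h2], h3⟩
      intro x hx
      rcases List.mem_append.mp hx with hx | hx
      · exact h1 x hx
      · simp at hx; exact hx ▸ hz
    · exact ⟨r, [], by simp, by simp, h⟩

lemma rightStrip_exists {Z : Set (List A)} (hne : NE Z) (r : List A) :
    ∃ (v : List A) (l : List (List A)),
      (∀ z ∈ l, z ∈ Z) ∧ v ++ l.flatten = r ∧ NoSuf Z v :=
  rightStrip_exists_aux hne r.length r le_rfl

/-- Left strip: uniqueness. -/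
lemma leftStrip_unique {Z : Set (List A)} (hZ : IsPrefixCode Z) :
    ∀ (l l' : List (List A)) (u u' : List A), (∀ z ∈ l, z ∈ Z) → (∀ z ∈ l', z ∈ Z) →
      NoPre Z u → NoPre Z u' → l.flatten ++ u = l'.flatten ++ u' → l = l' ∧ u = u' := by
  intro l
  induction l with
  | nil =>
    intro l' u u' _ hl' hu hu' heq
    cases l' with
    | nil => simpa using heq
    | cons z t =>
      exfalso
      apply hu
      refine ⟨z, hl' z (by simp), ?_⟩
      simp only [List.flatten_nil, List.nil_append, List.flatten_cons] at heq
      exact heq ▸ ⟨t.flatten ++ u', by simp⟩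
  | cons z t ih =>
    intro l' u u' hl hl' hu hu' heq
    cases l' with
    | nil =>
      exfalso
      apply hu'
      refine ⟨z, hl z (by simp), ?_⟩
      simp only [List.flatten_cons, List.flatten_nil, List.nil_append] at heq
      exact heq.symm ▸ ⟨t.flatten ++ u, by simp⟩
    | cons z' t' =>
      simp only [List.flatten_cons, List.append_assoc] at heq
      have hcomp : z <+: z' ∨ z' <+: z :=
        List.prefix_or_prefix_of_prefix ⟨_, heq⟩ ⟨_, rfl⟩
      have hzz' : z = z' := by
        rcases hcomp with h | h
        · exact hZ.2.2 z (hl z (by simp)) z' (hl' z' (by simp)) h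
        · exact (hZ.2.2 z' (hl' z' (by simp)) z (hl z (by simp)) h).symm
      subst hzz'
      have heq' : t.flatten ++ u = t'.flatten ++ u' := List.append_cancel_left heq
      obtain ⟨h1, h2⟩ := ih t' u u' (fun x hx => hl x (by simp [hx]))
        (fun x hx => hl' x (by simp [hx])) hu hu' heq'
      exact ⟨by rw [h1], h2⟩

/-- Right strip: uniqueness. -/
lemma rightStrip_unique {Z : Set (List A)} (hZ : IsSuffixCode Z) :
    ∀ (l l' : List (List A)) (v v' : List A), (∀ z ∈ l, z ∈ Z) → (∀ z ∈ l', z ∈ Z) →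
      NoSuf Z v → NoSuf Z v' → v ++ l.flatten = v' ++ l'.flatten → l = l' ∧ v = v' := by
  intro l
  induction l using List.reverseRecOn with
  | nil =>
    intro l' v v' _ hl' hv hv' heq
    induction l' using List.reverseRecOn with
    | nil => simpa using heq
    | append_singleton t z _ =>
      exfalso
      apply hv
      refine ⟨z, hl' z (by simp), ?_⟩
      simp only [List.flatten_nil, List.append_nil, List.flatten_append,
        List.flatten_cons] at heq
      refine heq ▸ ⟨v' ++ t.flatten, by simp⟩
  | append_singleton t z ih =>
    intro l' v v' hl hl' hv hv' heq
    induction l' using List.reverseRecOn with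
    | nil =>
      exfalso
      apply hv'
      refine ⟨z, hl z (by simp), ?_⟩
      simp only [List.flatten_append, List.flatten_cons, List.flatten_nil,
        List.append_nil] at heq
      exact heq.symm ▸ ⟨v ++ t.flatten, by simp⟩
    | append_singleton t' z' _ =>
      have heq2 : (v ++ t.flatten) ++ z = (v' ++ t'.flatten) ++ z' := by
        simpa [List.flatten_append, List.append_assoc] using heq
      have hcomp : z <:+ z' ∨ z' <:+ z :=
        List.suffix_or_suffix_of_suffix ⟨_, heq2⟩ ⟨_, rfl⟩
      have hzz' : z = z' := by
        rcases hcomp with h | h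
        · exact hZ.2.2 z (hl z (by simp)) z' (hl' z' (by simp)) h
        · exact (hZ.2.2 z' (hl' z' (by simp)) z (hl z (by simp)) h).symm
      subst hzz'
      have heq' : v ++ t.flatten = v' ++ t'.flatten := List.append_cancel_right heq2
      obtain ⟨h1, h2⟩ := ih t' v v' (fun x hx => hl x (by simp [hx]))
        (fun x hx => hl' x (by simp [hx])) hv hv' heq'
      exact ⟨by rw [h1], h2⟩

/-- Unique factorization over a bifix code. -/
lemma code_unique {Z : Set (List A)} (hZ : IsPrefixCode Z)
    {l l' : List (List A)} (hl : ∀ z ∈ l, z ∈ Z) (hl' : ∀ z ∈ l', z ∈ Z)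
    (heq : l.flatten = l'.flatten) : l = l' := by
  have hne : NE Z := hZ.2.1
  have := leftStrip_unique hZ l l' [] [] hl hl' (noPre_nil hne) (noPre_nil hne)
    (by simpa using heq)
  exact this.1

/-- Parses with equal first components are equal (prefix code). -/
lemma parse_eq_of_fst {Z : Set (List A)} (hZ : IsPrefixCode Z) {w : List A}
    {p q : List A × List A × List A} (hp : IsParse Z w p) (hq : IsParse Z w q)
    (h1 : p.1 = q.1) : p = q := by
  obtain ⟨hp1, hp2, ⟨l, hl, hlf⟩, hp4⟩ := hp
  obtain ⟨hq1, hq2, ⟨m, hm, hmf⟩, hq4⟩ := hq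
  have heq : l.flatten ++ p.2.2 = m.flatten ++ q.2.2 := by
    have : p.1 ++ (l.flatten ++ p.2.2) = q.1 ++ (m.flatten ++ q.2.2) := by
      rw [hlf, hmf, ← List.append_assoc, ← List.append_assoc, hp1, hq1]
    rw [h1] at this
    exact List.append_cancel_left this
  obtain ⟨hlm, hu⟩ := leftStrip_unique hZ l m p.2.2 q.2.2 hl hm hp4 hq4 heq
  have h2 : p.2.1 = q.2.1 := by rw [← hlf, ← hmf, hlm]
  exact Prod.ext h1 (Prod.ext h2 hu)

/-- Parses with equal third components are equal (suffix code). -/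
lemma parse_eq_of_thd {Z : Set (List A)} (hZ : IsSuffixCode Z) {w : List A}
    {p q : List A × List A × List A} (hp : IsParse Z w p) (hq : IsParse Z w q)
    (h3 : p.2.2 = q.2.2) : p = q := by
  obtain ⟨hp1, hp2, ⟨l, hl, hlf⟩, hp4⟩ := hp
  obtain ⟨hq1, hq2, ⟨m, hm, hmf⟩, hq4⟩ := hq
  have heq2 : p.1 ++ l.flatten = q.1 ++ m.flatten := by
    rw [hlf, hmf]
    have h0 := hp1.trans hq1.symm
    rw [h3] at h0
    exact List.append_cancel_right h0
  obtain ⟨hlm, hv⟩ := rightStrip_unique hZ l m p.1 q.1 hl hm hp2 hq2 heq2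
  have h2 : p.2.1 = q.2.1 := by rw [← hlf, ← hmf, hlm]
  exact Prod.ext hv (Prod.ext h2 h3)

lemma parse_fst_mem_GP {Z : Set (List A)} {w : List A} {p : List A × List A × List A}
    (hp : IsParse Z w p) : p.1 ∈ GP Z w :=
  ⟨⟨p.2.1 ++ p.2.2, by rw [← List.append_assoc, hp.1]⟩, hp.2.1⟩

lemma parse_thd_mem_GS {Z : Set (List A)} {w : List A} {p : List A × List A × List A}
    (hp : IsParse Z w p) : p.2.2 ∈ GS Z w :=
  ⟨⟨p.1 ++ p.2.1, hp.1⟩, hp.2.2.2⟩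

lemma exists_parse_of_mem_GP {Z : Set (List A)} (hne : NE Z) {w v : List A}
    (hv : v ∈ GP Z w) : ∃ p : List A × List A × List A, IsParse Z w p ∧ p.1 = v := by
  obtain ⟨⟨r, hr⟩, hnos⟩ := hv
  obtain ⟨l, u, hl, hlf, hnp⟩ := leftStrip_exists hne r
  refine ⟨(v, l.flatten, u), ⟨?_, hnos, ⟨l, hl, rfl⟩, hnp⟩, rfl⟩
  simp only [List.append_assoc, hlf, hr]

lemma exists_parse_of_mem_GS {Z : Set (List A)} (hne : NE Z) {w u : List A}
    (hu : u ∈ GS Z w) : ∃ p : List A × List A × List A, IsParse Z w p ∧ p.2.2 = u := by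
  obtain ⟨⟨r, hr⟩, hnop⟩ := hu
  obtain ⟨v, l, hl, hlf, hnos⟩ := rightStrip_exists hne r
  refine ⟨(v, l.flatten, u), ⟨?_, hnos, ⟨l, hl, rfl⟩, hnop⟩, rfl⟩
  rw [← hr, hlf]

/-- The prefix-count formula for the number of parses. -/
lemma delta_eq_GP {Z : Set (List A)} (hZ : IsPrefixCode Z) (w : List A) :
    delta Z w = (GP Z w).ncard := by
  have himg : (fun p : List A × List A × List A => p.1) '' {p | IsParse Z w p} = GP Z w := by
    apply Set.Subset.antisymm
    · rintro v ⟨p, hp, rfl⟩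
      exact parse_fst_mem_GP hp
    · intro v hv
      obtain ⟨p, hp, hp1⟩ := exists_parse_of_mem_GP hZ.2.1 hv
      exact ⟨p, hp, hp1⟩
  rw [delta, ← himg]
  exact (Set.ncard_image_of_injOn (fun p hp q hq h => parse_eq_of_fst hZ hp hq h)).symm

/-- The suffix-count formula for the number of parses. -/
lemma delta_eq_GS {Z : Set (List A)} (hZ : IsSuffixCode Z) (w : List A) :
    delta Z w = (GS Z w).ncard := by
  have himg : (fun p : List A × List A × List A => p.2.2) '' {p | IsParse Z w p} = GS Z w := by
    apply Set.Subset.antisymm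
    · rintro v ⟨p, hp, rfl⟩
      exact parse_thd_mem_GS hp
    · intro v hv
      obtain ⟨p, hp, hp1⟩ := exists_parse_of_mem_GS hZ.2.1 hv
      exact ⟨p, hp, hp1⟩
  rw [delta, ← himg]
  exact (Set.ncard_image_of_injOn (fun p hp q hq h => parse_eq_of_thd hZ hp hq h)).symm

/-- Monotone: right extension (prefix-count). -/
lemma delta_le_append_right {Z : Set (List A)} (hZ : IsPrefixCode Z) (w t : List A) :
    delta Z w ≤ delta Z (w ++ t) := by
  rw [delta_eq_GP hZ, delta_eq_GP hZ]
  refine Set.ncard_le_ncard ?_ (GP_finite Z (w ++ t))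
  rintro v ⟨hpre, hns⟩
  exact ⟨hpre.trans (List.prefix_append w t), hns⟩

/-- Monotone: left extension (suffix-count). -/
lemma delta_le_append_left {Z : Set (List A)} (hZ : IsSuffixCode Z) (w t : List A) :
    delta Z w ≤ delta Z (t ++ w) := by
  rw [delta_eq_GS hZ, delta_eq_GS hZ]
  refine Set.ncard_le_ncard ?_ (GS_finite Z (t ++ w))
  rintro v ⟨hsuf, hns⟩
  exact ⟨hsuf.trans (List.suffix_append t w), hns⟩

lemma delta_le_of_infix {Z : Set (List A)} (hZp : IsPrefixCode Z) (hZs : IsSuffixCode Z)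
    {x w : List A} (h : x <:+: w) : delta Z x ≤ delta Z w := by
  obtain ⟨p, s, rfl⟩ := h
  calc delta Z x ≤ delta Z (x ++ s) := delta_le_append_right hZp x s
    _ ≤ delta Z (p ++ (x ++ s)) := delta_le_append_left hZs (x ++ s) p
    _ = delta Z (p ++ x ++ s) := by rw [List.append_assoc]

/-- Strict increment on a right extension that has no suffix in `Z`. -/
lemma delta_succ_le {Z : Set (List A)} (hZ : IsPrefixCode Z) {w y : List A}
    (hy : y ≠ []) (hns : NoSuf Z (w ++ y)) : delta Z w + 1 ≤ delta Z (w ++ y) := by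
  rw [delta_eq_GP hZ, delta_eq_GP hZ]
  have hss : GP Z w ⊂ GP Z (w ++ y) := by
    constructor
    · rintro v ⟨hpre, hnsv⟩
      exact ⟨hpre.trans (List.prefix_append w y), hnsv⟩
    · intro hsub
      have h1 : w ++ y ∈ GP Z w := hsub ⟨List.prefix_rfl, hns⟩
      have h2 := List.IsPrefix.length_le h1.1
      rw [List.length_append] at h2
      exact hy (List.eq_nil_of_length_eq_zero (by omega))
  exact Set.ncard_lt_ncard hss (GP_finite Z (w ++ y))

lemma one_le_delta {Z : Set (List A)} (hZ : IsPrefixCode Z) (w : List A) :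
    1 ≤ delta Z w := by
  rw [delta_eq_GP hZ]
  have : [] ∈ GP Z w := ⟨List.nil_prefix, noSuf_nil hZ.2.1⟩
  have hne : (GP Z w).Nonempty := ⟨[], this⟩
  exact (Set.ncard_pos (GP_finite Z w)).mpr hne

/-- If every prefix of `w` has no suffix in `Z`, then `δ(w) = |w| + 1`. -/
lemma length_lt_delta {Z : Set (List A)} (hZ : IsPrefixCode Z) {w : List A}
    (h : ∀ v, v <+: w → NoSuf Z v) : w.length + 1 ≤ delta Z w := by
  rw [delta_eq_GP hZ]
  have hsub : ∀ i ∈ Set.Iic w.length, w.take i ∈ GP Z w :=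
    fun i _ => ⟨List.take_prefix i w, h _ (List.take_prefix i w)⟩
  have hinj : Set.InjOn (fun i => w.take i) (Set.Iic w.length) := by
    intro i hi j hj hij
    have : (w.take i).length = (w.take j).length := congrArg List.length hij
    simp only [List.length_take] at this
    simp only [Set.mem_Iic] at hi hj
    omega
  have := Set.ncard_le_ncard_of_injOn _ hsub hinj (GP_finite Z w)
  have hIic : (Set.Iic w.length).ncard = w.length + 1 := by
    rw [← Finset.coe_Iic, Set.ncard_coe_finset, Nat.card_Iic]
  omega

/-- Recurrent sets contain arbitrarily long words. -/
lemma recurrent_long {F : Set (List A)} (hF : Recurrent F) (n : ℕ) :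
    ∃ w ∈ F, n ≤ w.length := by
  obtain ⟨hfac, hne, hnetriv, hrec⟩ := hF
  have : ∃ u ∈ F, u ≠ [] := by
    by_contra h
    push_neg at h
    apply hnetriv
    apply Set.Subset.antisymm
    · intro x hx; simp [h x hx]
    · intro x hx
      obtain ⟨u, hu⟩ := hne
      simp only [Set.mem_singleton_iff] at hx
      subst hx
      exact hfac u hu [] ⟨[], u, by simp⟩
  obtain ⟨u, huF, hune⟩ := this
  have hul : 1 ≤ u.length := List.length_pos_iff.mpr hune
  induction n with
  | zero => exact ⟨u, huF, Nat.zero_le _⟩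
  | succ n ih =>
    obtain ⟨w, hwF, hwl⟩ := ih
    obtain ⟨t, ht⟩ := hrec w hwF u huF
    refine ⟨w ++ t ++ u, ht, ?_⟩
    simp only [List.length_append]
    omega

/-- Factorial: members of a flatten-list of an infix are in `F`. -/
lemma mem_F_of_infix {F : Set (List A)} (hfac : Factorial F) {w u : List A}
    (hw : w ∈ F) (h : u <:+: w) : u ∈ F := hfac w hw u h

/-- For `w ∈ F` (factorial `F`), parses w.r.t. `Z ∩ F` and w.r.t. `Z` coincide. -/
lemma parses_inter {Z F : Set (List A)} (hfac : Factorial F) {w : List A} (hw : w ∈ F) :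
    {p : List A × List A × List A | IsParse (Z ∩ F) w p} = {p | IsParse Z w p} := by
  ext p
  simp only [Set.mem_setOf_eq]
  constructor
  · rintro ⟨heq, h2, ⟨l, hl, hlf⟩, h4⟩
    refine ⟨heq, ?_, ⟨l, fun u hu => (hl u hu).1, hlf⟩, ?_⟩
    · rintro ⟨s, hs, hsuf⟩
      refine h2 ⟨s, ⟨hs, ?_⟩, hsuf⟩
      have : s <:+: w := by
        refine (hsuf.isInfix).trans ?_
        exact ⟨[], p.2.1 ++ p.2.2, by simpa [List.append_assoc] using heq⟩
      exact hfac w hw s this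
    · rintro ⟨s, hs, hpre⟩
      refine h4 ⟨s, ⟨hs, ?_⟩, hpre⟩
      have : s <:+: w := by
        refine (hpre.isInfix).trans ?_
        exact ⟨p.1 ++ p.2.1, [], by simpa [List.append_assoc] using heq⟩
      exact hfac w hw s this
  · rintro ⟨heq, h2, ⟨l, hl, hlf⟩, h4⟩
    refine ⟨heq, ?_, ⟨l, fun u hu => ⟨hl u hu, ?_⟩, hlf⟩, ?_⟩
    · rintro ⟨s, hs, hsuf⟩
      exact h2 ⟨s, hs.1, hsuf⟩
    · have h1 : u <:+: p.2.1 := hlf ▸ List.infix_of_mem_flatten hu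
      have h2' : p.2.1 <:+: w := ⟨p.1, p.2.2, by simpa [List.append_assoc] using heq⟩
      exact hfac w hw u (h1.trans h2')
    · rintro ⟨s, hs, hpre⟩
      exact h4 ⟨s, hs.1, hpre⟩

lemma delta_inter {Z F : Set (List A)} (hfac : Factorial F) {w : List A} (hw : w ∈ F) :
    delta (Z ∩ F) w = delta Z w := by
  unfold delta
  rw [parses_inter hfac hw]

lemma delta_le_deg {Z : Set (List A)} (w : List A) : (delta Z w : ℕ∞) ≤ deg Z :=
  le_iSup₂ (f := fun x (_ : x ∈ Set.univ) => ((delta Z x : ℕ∞))) w (Set.mem_univ w)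

lemma delta_le_toNat {Z : Set (List A)} (hd : deg Z ≠ ⊤) (w : List A) :
    delta Z w ≤ (deg Z).toNat := by
  have h := delta_le_deg (Z := Z) w
  rw [← ENat.coe_toNat hd] at h
  exact_mod_cast h

/-- The intersection of a finite-degree prefix code with a recurrent set is nonempty. -/
lemma inter_nonempty {Z F : Set (List A)} (hZp : IsPrefixCode Z) (hd : deg Z ≠ ⊤)
    (hF : Recurrent F) : (Z ∩ F).Nonempty := by
  by_contra hempty
  rw [Set.not_nonempty_iff_eq_empty] at hempty
  obtain ⟨w, hwF, hwl⟩ := recurrent_long hF ((deg Z).toNat)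
  have hall : ∀ v, v <+: w → NoSuf Z v := by
    rintro v hv ⟨z, hz, hsuf⟩
    have : z ∈ F := hF.1 w hwF z (hsuf.isInfix.trans hv.isInfix)
    exact absurd (Set.mem_inter hz this) (by simp [hempty])
  have h1 := length_lt_delta hZp hall
  have h2 := delta_le_toNat hd w
  omega

/-- Key step for `F`-maximality: within a bifix code `Y ⊆ F` containing `Z ∩ F`,
an element outside `Z` gives unboundedly many parses. -/
lemma mem_inter_of_mem {Z F Y : Set (List A)} (hZp : IsPrefixCode Z)
    (hd : deg Z ≠ ⊤) (hF : Recurrent F) (hY : IsBifixCode Y) (hYF : Y ⊆ F)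
    (hXY : Z ∩ F ⊆ Y) {y : List A} (hy : y ∈ Y) : y ∈ Z ∩ F := by
  have hyF : y ∈ F := hYF hy
  by_cases hyZ : y ∈ Z
  · exact ⟨hyZ, hyF⟩
  exfalso
  have hyne : y ≠ [] := hY.1.2.1 y hy
  have key : ∀ v, v ++ y ∈ F → NoSuf Z (v ++ y) := by
    rintro v hvF ⟨z, hz, hsuf⟩
    have hzF : z ∈ F := hF.1 _ hvF z hsuf.isInfix
    have hzY : z ∈ Y := hXY ⟨hz, hzF⟩
    have hcomp : z <:+ y ∨ y <:+ z :=
      List.suffix_or_suffix_of_suffix hsuf (List.suffix_append v y)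
    rcases hcomp with h | h
    · exact hyZ ((hY.2.2.2 z hzY y hy h) ▸ hz)
    · exact hyZ ((hY.2.2.2 y hy z hzY h).symm ▸ hz)
  have growth : ∀ k : ℕ, ∃ w ∈ F, k ≤ delta Z w := by
    intro k
    induction k with
    | zero => exact ⟨y, hyF, Nat.zero_le _⟩
    | succ k ih =>
      obtain ⟨w, hwF, hwd⟩ := ih
      obtain ⟨t, ht⟩ := hF.2.2.2 w hwF y hyF
      refine ⟨w ++ t ++ y, ht, ?_⟩
      have h1 : delta Z (w ++ t) + 1 ≤ delta Z ((w ++ t) ++ y) :=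
        delta_succ_le hZp hyne (key (w ++ t) ht)
      have h2 : delta Z w ≤ delta Z (w ++ t) := delta_le_append_right hZp w t
      omega
  obtain ⟨w, _, hwd⟩ := growth ((deg Z).toNat + 1)
  have := delta_le_toNat hd w
  omega

/-- If a long word had no prefix in `Z`, powers of it would have unboundedly
many parses. -/
lemma exists_prefix_of_long {Z : Set (List A)} (hZs : IsSuffixCode Z) (hd : deg Z ≠ ⊤)
    {m : ℕ} (hm : ∀ z ∈ Z, z.length ≤ m) {y : List A} (hy : m ≤ y.length)
    (hy1 : 1 ≤ y.length) : ∃ z ∈ Z, z <+: y := by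
  by_contra hnp
  push_neg at hnp
  have hnoPre : ∀ j : ℕ, NoPre Z ((List.replicate j y).flatten) := by
    intro j
    cases j with
    | zero => exact noPre_nil hZs.2.1
    | succ j =>
      rintro ⟨z, hz, hpre⟩
      rw [List.replicate_succ, List.flatten_cons] at hpre
      have hzy : z <+: y ∨ y <+: z :=
        List.prefix_or_prefix_of_prefix hpre (List.prefix_append y _)
      rcases hzy with h | h
      · exact hnp z hz h
      · have : y = z := List.IsPrefix.eq_of_length_le h ((hm z hz).trans hy)
        exact hnp z hz (this ▸ List.prefix_rfl)
  set k := (deg Z).toNat + 1 with hk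
  have hsub : ∀ j ∈ Set.Iic k, (List.replicate j y).flatten ∈
      GS Z ((List.replicate k y).flatten) := by
    intro j hj
    refine ⟨?_, hnoPre j⟩
    have : List.replicate k y = List.replicate (k - j) y ++ List.replicate j y := by
      rw [← List.replicate_add]
      congr 1
      simp only [Set.mem_Iic] at hj
      omega
    rw [this, List.flatten_append]
    exact ⟨_, rfl⟩
  have hinj : Set.InjOn (fun j => (List.replicate j y).flatten) (Set.Iic k) := by
    intro i _ j _ hij
    have := congrArg List.length hij
    simp only [List.length_flatten, List.map_replicate, List.sum_replicate,
      smul_eq_mul] at this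
    have h2 : i * y.length = j * y.length := by simpa using this
    exact Nat.eq_of_mul_eq_mul_right hy1 h2
  have h1 := Set.ncard_le_ncard_of_injOn _ hsub hinj (GS_finite Z _)
  have hIic : (Set.Iic k).ncard = k + 1 := by
    rw [← Finset.coe_Iic, Set.ncard_coe_finset, Nat.card_Iic]
  have h2 : delta Z ((List.replicate k y).flatten) ≤ (deg Z).toNat :=
    delta_le_toNat hd _
  rw [delta_eq_GS hZs] at h2
  omega

lemma exists_suffix_of_long {Z : Set (List A)} (hZp : IsPrefixCode Z) (hd : deg Z ≠ ⊤)
    {m : ℕ} (hm : ∀ z ∈ Z, z.length ≤ m) {y : List A} (hy : m ≤ y.length)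
    (hy1 : 1 ≤ y.length) : ∃ z ∈ Z, z <:+ y := by
  by_contra hnp
  push_neg at hnp
  have hnoSuf : ∀ j : ℕ, NoSuf Z ((List.replicate j y).flatten) := by
    intro j
    cases j with
    | zero => exact noSuf_nil hZp.2.1
    | succ j =>
      rintro ⟨z, hz, hsuf⟩
      have hrep : (List.replicate (j+1) y).flatten = (List.replicate j y).flatten ++ y := by
        rw [List.replicate_add j 1, List.flatten_append]
        simp
      rw [hrep] at hsuf
      have hzy : z <:+ y ∨ y <:+ z :=
        List.suffix_or_suffix_of_suffix hsuf (List.suffix_append _ y)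
      rcases hzy with h | h
      · exact hnp z hz h
      · have : y = z := List.IsSuffix.eq_of_length_le h ((hm z hz).trans hy)
        exact hnp z hz (this ▸ List.suffix_rfl)
  set k := (deg Z).toNat + 1 with hk
  have hsub : ∀ j ∈ Set.Iic k, (List.replicate j y).flatten ∈
      GP Z ((List.replicate k y).flatten) := by
    intro j hj
    refine ⟨?_, hnoSuf j⟩
    have : List.replicate k y = List.replicate j y ++ List.replicate (k - j) y := by
      rw [← List.replicate_add]
      congr 1
      simp only [Set.mem_Iic] at hj
      omega
    rw [this, List.flatten_append]
    exact ⟨_, rfl⟩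
  have hinj : Set.InjOn (fun j => (List.replicate j y).flatten) (Set.Iic k) := by
    intro i _ j _ hij
    have := congrArg List.length hij
    simp only [List.length_flatten, List.map_replicate, List.sum_replicate,
      smul_eq_mul] at this
    have h2 : i * y.length = j * y.length := by simpa using this
    exact Nat.eq_of_mul_eq_mul_right hy1 h2
  have h1 := Set.ncard_le_ncard_of_injOn _ hsub hinj (GP_finite Z _)
  have hIic : (Set.Iic k).ncard = k + 1 := by
    rw [← Finset.coe_Iic, Set.ncard_coe_finset, Nat.card_Iic]
  have h2 : delta Z ((List.replicate k y).flatten) ≤ (deg Z).toNat :=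
    delta_le_toNat hd _
  rw [delta_eq_GP hZp] at h2
  omega

/-- Left absorption: if `|w| ≥ m` then `δ(vw) = δ(w)`. -/
lemma delta_prepend_eq {Z : Set (List A)} (hZs : IsSuffixCode Z) (hd : deg Z ≠ ⊤)
    {m : ℕ} (h1 : 1 ≤ m) (hm : ∀ z ∈ Z, z.length ≤ m) {w : List A}
    (hw : m ≤ w.length) (v : List A) : delta Z (v ++ w) = delta Z w := by
  rw [delta_eq_GS hZs, delta_eq_GS hZs]
  congr 1
  apply Set.Subset.antisymm
  · rintro t ⟨hsuf, hnp⟩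
    refine ⟨?_, hnp⟩
    rcases List.suffix_or_suffix_of_suffix hsuf (List.suffix_append v w) with h | h
    · exact h
    · exfalso
      have htl : m ≤ t.length := le_trans hw (List.IsSuffix.length_le h)
      have ht1 : 1 ≤ t.length := le_trans h1 htl
      obtain ⟨z, hz, hzp⟩ := exists_prefix_of_long hZs hd hm htl ht1
      exact hnp ⟨z, hz, hzp⟩
  · rintro t ⟨hsuf, hnp⟩
    exact ⟨hsuf.trans (List.suffix_append v w), hnp⟩

/-- Right absorption: if `|w| ≥ m` then `δ(wv) = δ(w)`. -/
lemma delta_postpend_eq {Z : Set (List A)} (hZp : IsPrefixCode Z) (hd : deg Z ≠ ⊤)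
    {m : ℕ} (h1 : 1 ≤ m) (hm : ∀ z ∈ Z, z.length ≤ m) {w : List A}
    (hw : m ≤ w.length) (v : List A) : delta Z (w ++ v) = delta Z w := by
  rw [delta_eq_GP hZp, delta_eq_GP hZp]
  congr 1
  apply Set.Subset.antisymm
  · rintro t ⟨hpre, hns⟩
    refine ⟨?_, hns⟩
    rcases List.prefix_or_prefix_of_prefix hpre (List.prefix_append w v) with h | h
    · exact h
    · exfalso
      have htl : m ≤ t.length := le_trans hw (List.IsPrefix.length_le h)
      have ht1 : 1 ≤ t.length := le_trans h1 htl
      obtain ⟨z, hz, hzs⟩ := exists_suffix_of_long hZp hd hm htl ht1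
      exact hns ⟨z, hz, hzs⟩
  · rintro t ⟨hpre, hns⟩
    exact ⟨hpre.trans (List.prefix_append w v), hns⟩

/-- For finite `Z`, the degree is attained at any word of length `≥ m`. -/
lemma deg_eq_delta_long {Z : Set (List A)} (hZp : IsPrefixCode Z) (hZs : IsSuffixCode Z)
    (hd : deg Z ≠ ⊤) {m : ℕ} (h1 : 1 ≤ m) (hm : ∀ z ∈ Z, z.length ≤ m) {w₀ : List A}
    (hw₀ : m ≤ w₀.length) : deg Z = (delta Z w₀ : ℕ∞) := by
  apply le_antisymm
  · apply iSup₂_le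
    intro u _
    have h2 : delta Z u ≤ delta Z (u ++ w₀) := delta_le_append_right hZp u w₀
    have h3 : delta Z (u ++ w₀) = delta Z w₀ := delta_prepend_eq hZs hd h1 hm hw₀ u
    exact_mod_cast h2.trans_eq h3
  · exact delta_le_deg w₀

/-- Auxiliary relation for the internal-factor injection. -/
def Rel (Z : Set (List A)) (p x s v u₂ : List A) : Prop :=
  ∃ (v₁ q u : List A) (l₁ L l₂ : List (List A)),
    (∀ t ∈ l₁, t ∈ Z) ∧ (∀ t ∈ L, t ∈ Z) ∧ (∀ t ∈ l₂, t ∈ Z) ∧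
    NoSuf Z v₁ ∧ NoPre Z u ∧ NoPre Z u₂ ∧
    v ++ q = x ∧
    v₁ ++ l₁.flatten = p ++ v ∧
    L.flatten ++ u = q ∧
    l₂.flatten ++ u₂ = u ++ s

lemma rel_total_eq {Z : Set (List A)} {p x s v u₂ v₁ q u : List A}
    {l₁ L l₂ : List (List A)}
    (h7 : v ++ q = x) (h8 : v₁ ++ l₁.flatten = p ++ v)
    (h9 : L.flatten ++ u = q) (h10 : l₂.flatten ++ u₂ = u ++ s) :
    v₁ ++ (l₁ ++ L ++ l₂).flatten ++ u₂ = p ++ x ++ s := by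
  rw [List.flatten_append, List.flatten_append]
  calc v₁ ++ (l₁.flatten ++ L.flatten ++ l₂.flatten) ++ u₂
      = (v₁ ++ l₁.flatten) ++ (L.flatten ++ (l₂.flatten ++ u₂)) := by
        simp [List.append_assoc]
    _ = (p ++ v) ++ (L.flatten ++ (u ++ s)) := by rw [h8, h10]
    _ = (p ++ v) ++ ((L.flatten ++ u) ++ s) := by simp [List.append_assoc]
    _ = (p ++ v) ++ (q ++ s) := by rw [h9]
    _ = p ++ (v ++ q) ++ s := by simp [List.append_assoc]
    _ = p ++ x ++ s := by rw [h7]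

lemma rel_exists {Z : Set (List A)} (hne : NE Z) {x v : List A} (hv : v <+: x)
    (p s : List A) : ∃ u₂, Rel Z p x s v u₂ := by
  obtain ⟨q, hq⟩ := hv
  obtain ⟨L, u, hL, hLf, hu⟩ := leftStrip_exists hne q
  obtain ⟨v₁, l₁, hl₁, hl₁f, hv₁⟩ := rightStrip_exists hne (p ++ v)
  obtain ⟨l₂, u₂, hl₂, hl₂f, hu₂⟩ := leftStrip_exists hne (u ++ s)
  exact ⟨u₂, v₁, q, u, l₁, L, l₂, hl₁, hL, hl₂, hv₁, hu, hu₂, hq, hl₁f, hLf, hl₂f⟩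

lemma rel_mem_GS {Z : Set (List A)} {p x s v u₂ : List A} (h : Rel Z p x s v u₂) :
    u₂ ∈ GS Z (p ++ x ++ s) := by
  obtain ⟨v₁, q, u, l₁, L, l₂, _, _, _, _, _, h6, h7, h8, h9, h10⟩ := h
  exact ⟨⟨v₁ ++ (l₁ ++ L ++ l₂).flatten, by
    have := rel_total_eq (Z := Z) h7 h8 h9 h10
    simpa [List.append_assoc] using this⟩, h6⟩

lemma rel_injective {Z : Set (List A)} (hZs : IsSuffixCode Z) (hZp : IsPrefixCode Z)
    {p x s v v' u₂ : List A} (h : Rel Z p x s v u₂) (h' : Rel Z p x s v' u₂)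
    (hnsv : NoSuf Z v) (hnsv' : NoSuf Z v') : v = v' := by
  obtain ⟨v₁, q, u, l₁, L, l₂, hl₁, hL, hl₂, h4, h5, h6, h7, h8, h9, h10⟩ := h
  obtain ⟨v₁', q', u', l₁', L', l₂', hl₁', hL', hl₂', h4', h5', h6', h7', h8', h9', h10'⟩ := h'
  have hM : ∀ t ∈ l₁ ++ L ++ l₂, t ∈ Z := by
    intro t ht
    rcases List.mem_append.mp ht with ht | ht
    · rcases List.mem_append.mp ht with ht | ht
      · exact hl₁ t ht
      · exact hL t ht
    · exact hl₂ t ht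
  have hM' : ∀ t ∈ l₁' ++ L' ++ l₂', t ∈ Z := by
    intro t ht
    rcases List.mem_append.mp ht with ht | ht
    · rcases List.mem_append.mp ht with ht | ht
      · exact hl₁' t ht
      · exact hL' t ht
    · exact hl₂' t ht
  have hE : (v₁ ++ (l₁ ++ L ++ l₂).flatten) ++ u₂ = (v₁' ++ (l₁' ++ L' ++ l₂').flatten) ++ u₂ := by
    have e1 := rel_total_eq (Z := Z) h7 h8 h9 h10
    have e2 := rel_total_eq (Z := Z) h7' h8' h9' h10'
    simp only [List.flatten_append, List.append_assoc] at e1 e2 ⊢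
    rw [e1, e2]
  have hE2 := List.append_cancel_right hE
  obtain ⟨hMeq, hv₁eq⟩ := rightStrip_unique hZs _ _ _ _ hM hM' h4 h4' hE2
  -- l₁ and l₁' are both prefixes of the common list
  have hpre1 : l₁ <+: (l₁ ++ L ++ l₂) := ⟨L ++ l₂, (List.append_assoc _ _ _).symm⟩
  have hpre2 : l₁' <+: (l₁ ++ L ++ l₂) :=
    hMeq ▸ (⟨L' ++ l₂', (List.append_assoc _ _ _).symm⟩ : l₁' <+: (l₁' ++ L' ++ l₂'))
  have hfinal : ∀ (a a' : List A) (la la' : List (List A)),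
      NoSuf Z a → NoSuf Z a' → (∀ t ∈ la', t ∈ Z) → la <+: la' →
      v₁ ++ la.flatten = p ++ a → v₁ ++ la'.flatten = p ++ a' → a = a' ∨ ∃ zz ∈ Z, zz <:+ a' := by
    intro a a' la la' hnsa hnsa' hla' hlapre e e'
    obtain ⟨e0, rfl⟩ := hlapre
    rcases List.eq_nil_or_concat e0 with rfl | ⟨e1, zl, rfl⟩
    · left
      have : v₁ ++ la.flatten = v₁ ++ (la ++ []).flatten := by simp
      rw [← this] at e'
      exact List.append_cancel_left (e.symm.trans e')
    · right
      have hzl : zl ∈ Z := hla' zl (by simp)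
      refine ⟨zl, hzl, ?_⟩
      have : p ++ a' = (p ++ a) ++ (e1.flatten ++ zl) := by
        rw [← e, ← e']
        simp [List.flatten_append, List.append_assoc]
      have h2 : a' = a ++ (e1.flatten ++ zl) := by
        rw [List.append_assoc] at this
        exact List.append_cancel_left this
      rw [h2]
      exact ⟨a ++ e1.flatten, by simp [List.append_assoc]⟩
  rcases List.prefix_or_prefix_of_prefix hpre1 hpre2 with h | h
  · rcases hfinal v v' l₁ l₁' hnsv hnsv' hl₁' h h8 (hv₁eq ▸ h8') with h | ⟨zz, hzz, hsuf⟩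
    · exact h
    · exact absurd ⟨zz, hzz, hsuf⟩ hnsv'
  · rcases hfinal v' v l₁' l₁ hnsv' hnsv hl₁ h (hv₁eq ▸ h8') h8 with h | ⟨zz, hzz, hsuf⟩
    · exact h.symm
    · exact absurd ⟨zz, hzz, hsuf⟩ hnsv

lemma rel_not_nil {Z : Set (List A)} (hZs : IsSuffixCode Z) (hZp : IsPrefixCode Z)
    {z p x s v : List A} (hz : z ∈ Z) (hzeq : z = p ++ x ++ s) (hp : p ≠ [])
    (hs : s ≠ []) (hv : v <+: x) : ¬ Rel Z p x s v [] := by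
  rintro ⟨v₁, q, u, l₁, L, l₂, hl₁, hL, hl₂, h4, h5, h6, h7, h8, h9, h10⟩
  have hM : ∀ t ∈ l₁ ++ L ++ l₂, t ∈ Z := by
    intro t ht
    rcases List.mem_append.mp ht with ht | ht
    · rcases List.mem_append.mp ht with ht | ht
      · exact hl₁ t ht
      · exact hL t ht
    · exact hl₂ t ht
  have hE : v₁ ++ (l₁ ++ L ++ l₂).flatten = [] ++ ([z] : List (List A)).flatten := by
    have e1 := rel_total_eq (Z := Z) h7 h8 h9 h10
    rw [List.append_nil] at e1
    simpa [hzeq] using e1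
  obtain ⟨hMeq, hv₁⟩ := rightStrip_unique hZs _ _ _ _ hM
    (by intro t ht; simp only [List.mem_singleton] at ht; exact ht ▸ hz)
    h4 (noSuf_nil hZs.2.1) hE
  -- lengths
  have hplen : 1 ≤ p.length := List.length_pos_iff.mpr hp
  have hslen : 1 ≤ s.length := List.length_pos_iff.mpr hs
  have hvlen : v.length ≤ x.length := hv.length_le
  have hzlen : z.length = p.length + x.length + s.length := by
    rw [hzeq]; simp only [List.length_append]
  have hulen : u.length ≤ q.length := by
    have := congrArg List.length h9
    simp only [List.length_append] at this
    omega
  have hqlen : q.length ≤ x.length := by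
    have := congrArg List.length h7
    simp only [List.length_append] at this
    omega
  -- which of the three lists is [z]?
  rcases List.append_eq_cons_iff.mp hMeq with ⟨h1, h2⟩ | ⟨t, h1, h2⟩
  · -- l₁ ++ L = [], l₂ = [z]
    have : l₂.flatten = z := by rw [h2]; simp
    have e := h10
    rw [this] at e
    simp only [List.nil_append, List.append_nil] at e
    have := congrArg List.length e
    simp only [List.length_append] at this
    omega
  · -- l₁ ++ L = z :: t and t ++ l₂ = []
    have ht : t = [] := by
      rcases List.append_eq_nil_iff.mp h2.symm with ⟨h, _⟩; exact h
    subst ht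
    have hl₂nil : l₂ = [] := by
      rcases List.append_eq_nil_iff.mp h2.symm with ⟨_, h⟩; exact h
    rcases List.append_eq_cons_iff.mp h1 with ⟨hl₁nil, hLz⟩ | ⟨t', h1', h2'⟩
    · -- l₁ = [], L = [z]
      have : L.flatten = z := by rw [hLz]; simp
      rw [this] at h9
      have := congrArg List.length h9
      simp only [List.length_append] at this
      omega
    · -- l₁ = z :: t', t' ++ L = []
      have ht' : t' = [] := by
        rcases List.append_eq_nil_iff.mp h2'.symm with ⟨h, _⟩; exact h
      subst ht'
      have : l₁.flatten = z := by rw [h1']; simp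
      rw [this] at h8
      have := congrArg List.length h8
      simp only [List.length_append] at this
      have hv₁0 : v₁.length = 0 := by rw [hv₁]; simp
      omega

/-- D1: a proper internal factor of a code word has strictly fewer parses. -/
lemma delta_internal_lt {Z : Set (List A)} (hZp : IsPrefixCode Z) (hZs : IsSuffixCode Z)
    {z p x s : List A} (hz : z ∈ Z) (hzeq : z = p ++ x ++ s) (hp : p ≠ []) (hs : s ≠ []) :
    delta Z x + 1 ≤ delta Z z := by
  classical
  have hne : NE Z := hZp.2.1
  have key : ∀ v : List A, ∃ u₂ : List A, v ∈ GP Z x → Rel Z p x s v u₂ := by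
    intro v
    by_cases h : v ∈ GP Z x
    · obtain ⟨u₂, hu₂⟩ := rel_exists hne h.1 p s
      exact ⟨u₂, fun _ => hu₂⟩
    · exact ⟨[], fun hc => absurd hc h⟩
  choose f hf using key
  have himg : f '' GP Z x ⊆ GS Z z := by
    rintro t ⟨v, hv, rfl⟩
    exact hzeq ▸ rel_mem_GS (hf v hv)
  have hnil : [] ∉ f '' GP Z x := by
    rintro ⟨v, hv, hfv⟩
    exact rel_not_nil hZs hZp hz hzeq hp hs hv.1 (hfv ▸ hf v hv)
  have hinj : Set.InjOn f (GP Z x) := by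
    intro v hv v' hv' heq
    exact rel_injective hZs hZp (hf v hv) (heq ▸ hf v' hv') hv.2 hv'.2
  have hins : insert [] (f '' GP Z x) ⊆ GS Z z := by
    rw [Set.insert_subset_iff]
    exact ⟨⟨List.nil_suffix, noPre_nil hne⟩, himg⟩
  have hfin : (f '' GP Z x).Finite := ((GS_finite Z z).subset himg)
  have h1 : (insert [] (f '' GP Z x)).ncard = (f '' GP Z x).ncard + 1 :=
    Set.ncard_insert_of_notMem hnil hfin
  have h2 : (f '' GP Z x).ncard = (GP Z x).ncard := Set.ncard_image_of_injOn hinj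
  have h3 : (insert [] (f '' GP Z x)).ncard ≤ (GS Z z).ncard :=
    Set.ncard_le_ncard hins (GS_finite Z z)
  rw [delta_eq_GP hZp, delta_eq_GS hZs]
  omega

/-- Part D: if `F` is uniformly recurrent, `Z ∩ F` is finite. -/
lemma inter_finite {A : Type} [Fintype A] {Z F : Set (List A)} (hZp : IsPrefixCode Z)
    (hZs : IsSuffixCode Z) (hd : deg Z ≠ ⊤) (hUR : UniformlyRecurrent F) :
    (Z ∩ F).Finite := by
  by_contra hinf
  rw [← Set.not_infinite, not_not] at hinf
  have growth : ∀ k : ℕ, ∃ w ∈ Z ∩ F, k + 1 ≤ delta Z w := by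
    intro k
    induction k with
    | zero =>
      obtain ⟨w, hw⟩ := hinf.nonempty
      exact ⟨w, hw, one_le_delta hZp w⟩
    | succ k ih =>
      obtain ⟨w, hw, hwd⟩ := ih
      obtain ⟨n, hn⟩ := hUR.2 w hw.2
      have hlong : ((Z ∩ F) \ {l : List A | l.length ≤ n + 1}).Nonempty :=
        (hinf.diff (List.finite_length_le A (n + 1))).nonempty
      obtain ⟨x', hx'mem, hx'len⟩ := hlong
      simp only [Set.mem_setOf_eq, not_le] at hx'len
      have hx'ne : x' ≠ [] := by
        intro h; rw [h] at hx'len; simp at hx'len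
      obtain ⟨a, t, hx1⟩ : ∃ a t, x' = a :: t :=
        ⟨x'.head hx'ne, x'.tail, (List.cons_head_tail hx'ne).symm⟩
      have htne : t ≠ [] := by
        intro h
        rw [hx1, h] at hx'len
        simp at hx'len
      obtain ⟨t0, b, ht0⟩ : ∃ t0 b, t = t0 ++ [b] := by
        rcases List.eq_nil_or_concat t with h | ⟨t0, b, h⟩
        · exact absurd h htne
        · exact ⟨t0, b, by rw [h, List.concat_eq_append]⟩
      have hx'eq : x' = a :: (t0 ++ [b]) := by rw [hx1, ht0]
      have hmidlen : n ≤ t0.length := by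
        have h1 := congrArg List.length hx'eq
        simp only [List.length_cons, List.length_append, List.length_cons,
          List.length_nil] at h1
        omega
      have hmidF : t0 ∈ F := by
        refine hUR.1.1 x' hx'mem.2 t0 ?_
        exact ⟨[a], [b], by rw [hx'eq]; simp⟩
      obtain ⟨p', s', hw_in⟩ := hn t0 hmidF hmidlen
      have hx'int : x' = (a :: p') ++ w ++ (s' ++ [b]) := by
        rw [hx'eq, ← hw_in]
        simp [List.append_assoc]
      have hstep : delta Z w + 1 ≤ delta Z x' :=
        delta_internal_lt hZp hZs hx'mem.1 hx'int (by simp) (by simp)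
      exact ⟨x', hx'mem, by omega⟩
  obtain ⟨w, _, hwd⟩ := growth ((deg Z).toNat)
  have := delta_le_toNat hd w
  omega

end Aux

open PaperDefs in
theorem stmt_10 {A : Type} [Fintype A]
    (Z F : Set (List A))
    (hZ : IsFMaximalBifixCode Set.univ Z) (hd : deg Z ≠ ⊤)
    (hF : Recurrent F) :
    IsFMaximalBifixCode F (Z ∩ F) ∧
    Fdeg (Z ∩ F) F ≤ deg Z ∧
    (Z.Finite → Fdeg (Z ∩ F) F = deg Z) ∧
    (UniformlyRecurrent F → (Z ∩ F).Finite) := by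
  obtain ⟨⟨hZp, hZs⟩, -, -⟩ := hZ
  have hXne : (Z ∩ F).Nonempty := Aux.inter_nonempty hZp hd hF
  have hfac : Factorial F := hF.1
  have hle : Fdeg (Z ∩ F) F ≤ deg Z := by
    apply iSup₂_le
    intro w hw
    rw [Aux.delta_inter hfac hw]
    exact Aux.delta_le_deg w
  refine ⟨⟨⟨⟨hXne, fun w hw => hZp.2.1 w hw.1, fun u hu v hv h => hZp.2.2 u hu.1 v hv.1 h⟩,
      ⟨hXne, fun w hw => hZs.2.1 w hw.1, fun u hu v hv h => hZs.2.2 u hu.1 v hv.1 h⟩⟩,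
      Set.inter_subset_right, ?_⟩, hle, ?_, ?_⟩
  · intro Y hY hYF hXY
    exact Set.Subset.antisymm
      (fun y hy => Aux.mem_inter_of_mem hZp hd hF hY hYF hXY hy) hXY
  · intro hfin
    obtain ⟨m₀, hm₀⟩ := (hfin.image List.length).bddAbove
    have hm : ∀ z ∈ Z, z.length ≤ max m₀ 1 :=
      fun z hz => le_trans (hm₀ (Set.mem_image_of_mem _ hz)) (le_max_left _ _)
    have h1 : 1 ≤ max m₀ 1 := le_max_right _ _
    obtain ⟨w₀, hw₀F, hw₀l⟩ := Aux.recurrent_long hF (max m₀ 1)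
    have hdeg : deg Z = (delta Z w₀ : ℕ∞) := Aux.deg_eq_delta_long hZp hZs hd h1 hm hw₀l
    apply le_antisymm hle
    rw [hdeg]
    have : (delta (Z ∩ F) w₀ : ℕ∞) ≤ Fdeg (Z ∩ F) F :=
      le_iSup₂ (f := fun w (_ : w ∈ F) => ((delta (Z ∩ F) w : ℕ∞))) w₀ hw₀F
    rwa [Aux.delta_inter hfac hw₀F] at this
  · intro hUR
    exact Aux.inter_finite hZp hZs hd hUR
end

section
/- Let A be a finite alphabet. If Z is a group code over A and F is a uniformly recurrent tree set with alphabet A, then d_F(Z ∩ F) = d(Z). -/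
namespace Stmt11Aux
open PaperDefs List

/-- A maximal element for a reflexive-transitive relation on a finite set. -/
theorem exists_rmax_finset {X : Type*} (R : X → X → Prop)
    (hrefl : ∀ a, R a a) (htr : ∀ {a b c}, R a b → R b c → R a c) :
    ∀ s : Finset X, s.Nonempty → ∃ c ∈ s, ∀ d ∈ s, R c d → R d c := by
  classical
  intro s
  induction s using Finset.strongInductionOn with
  | _ s IH =>
    intro hne
    obtain ⟨a, ha⟩ := hne
    by_cases h : ∀ d ∈ s, R a d → R d a
    · exact ⟨a, ha, h⟩
    · push_neg at h
      obtain ⟨b, hb, hab, hnba⟩ := h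
      set t := s.filter (fun d => R b d) with ht
      have hbt : b ∈ t := by simp [ht, hrefl b, hb]
      have hat : a ∉ t := by
        simp only [ht, Finset.mem_filter]
        rintro ⟨-, hba⟩; exact hnba hba
      have hts : t ⊂ s := by
        refine (Finset.ssubset_iff_of_subset (Finset.filter_subset _ _)).2 ⟨a, ha, hat⟩
      obtain ⟨c, hct, hcmax⟩ := IH t hts ⟨b, hbt⟩
      have hbc : R b c := (Finset.mem_filter.1 hct).2
      refine ⟨c, Finset.mem_of_subset (Finset.filter_subset _ _) hct, ?_⟩
      intro d hd hcd
      exact hcmax d (Finset.mem_filter.2 ⟨hd, htr hbc hcd⟩) hcd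

theorem exists_rmax {X : Type*} (R : X → X → Prop)
    (hrefl : ∀ a, R a a) (htr : ∀ {a b c}, R a b → R b c → R a c)
    (S : Set X) (hfin : S.Finite) (hne : S.Nonempty) :
    ∃ c ∈ S, ∀ d ∈ S, R c d → R d c := by
  obtain ⟨c, hc, hmax⟩ := exists_rmax_finset R hrefl htr hfin.toFinset
    (by simpa using hne)
  refine ⟨c, by simpa using hc, fun d hd => hmax d (by simpa using hd)⟩

set_option linter.unusedSectionVars false

variable {A : Type} {Q : Type} [Fintype Q]

/-- Working context: the hypotheses we need about `F` and `α`. -/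
structure Ctx (F : Set (List A)) (α : List A → Equiv.Perm Q) : Prop where
  fac : ∀ w ∈ F, ∀ u, u <:+: w → u ∈ F
  recur : ∀ u ∈ F, ∀ v ∈ F, ∃ t, u ++ t ++ v ∈ F
  exne : ∃ w ∈ F, w ≠ []
  conn : ∀ w ∈ F, (extGraph F w).Connected
  alph : ∀ a : A, [a] ∈ F
  a1 : α [] = 1
  aapp : ∀ u v, α (u ++ v) = α u * α v

section Basic

variable {F : Set (List A)} {α : List A → Equiv.Perm Q} (h : Ctx F α)
include h

theorem Ctx.nil_mem : ([] : List A) ∈ F := by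
  obtain ⟨w, hw, -⟩ := h.exne
  exact h.fac w hw [] ⟨[], w, by simp⟩

theorem Ctx.prefix_mem {u w : List A} (hu : u <+: w) (hw : w ∈ F) : u ∈ F :=
  h.fac w hw u hu.isInfix

theorem Ctx.suffix_mem {u w : List A} (hu : u <:+ w) (hw : w ∈ F) : u ∈ F :=
  h.fac w hw u hu.isInfix

theorem Ctx.tail_mem {w : List A} (hw : w ∈ F) : w.tail ∈ F :=
  h.suffix_mem w.tail_suffix hw

theorem Ctx.exists_len_ge (n : ℕ) : ∃ w ∈ F, n ≤ w.length := by
  induction n with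
  | zero => exact ⟨[], h.nil_mem, by simp⟩
  | succ n IH =>
    obtain ⟨w, hw, hlen⟩ := IH
    obtain ⟨w₀, hw₀, hw₀ne⟩ := h.exne
    obtain ⟨t, ht⟩ := h.recur w hw w₀ hw₀
    refine ⟨w ++ t ++ w₀, ht, ?_⟩
    have : 1 ≤ w₀.length := by
      cases w₀ with
      | nil => exact (hw₀ne rfl).elim
      | cons a l => simp
    simp only [List.length_append]
    omega

theorem Ctx.exists_len (n : ℕ) : ∃ w ∈ F, w.length = n := by
  obtain ⟨w, hw, hlen⟩ := h.exists_len_ge n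
  exact ⟨w.take n, h.prefix_mem (w.take_prefix n) hw, by simp [hlen]⟩

theorem Ctx.left_ext {w : List A} (hw : w ∈ F) : ∃ c, c :: w ∈ F := by
  obtain ⟨w₀, hw₀, hw₀ne⟩ := h.exne
  obtain ⟨t, ht⟩ := h.recur w₀ hw₀ w hw
  have hne : w₀ ++ t ≠ [] := by
    intro hcon
    exact hw₀ne (List.append_eq_nil_iff.1 hcon).1
  obtain ⟨c, hc⟩ : ∃ c, (c : A) :: w <:+ w₀ ++ t ++ w := by
    refine ⟨(w₀ ++ t).getLast hne, ?_⟩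
    obtain ⟨l, hl⟩ : ∃ l, l ++ [(w₀ ++ t).getLast hne] = w₀ ++ t :=
      ⟨(w₀ ++ t).dropLast, List.dropLast_append_getLast hne⟩
    refine ⟨l, ?_⟩
    calc l ++ (w₀ ++ t).getLast hne :: w = (l ++ [(w₀ ++ t).getLast hne]) ++ w := by simp
      _ = w₀ ++ t ++ w := by rw [hl]
  exact ⟨c, h.suffix_mem hc ht⟩

theorem Ctx.right_ext {w : List A} (hw : w ∈ F) : ∃ b, w ++ [b] ∈ F := by
  obtain ⟨w₀, hw₀, hw₀ne⟩ := h.exne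
  obtain ⟨t, ht⟩ := h.recur w hw w₀ hw₀
  have hne : t ++ w₀ ≠ [] := by
    intro hcon
    exact hw₀ne (List.append_eq_nil_iff.1 hcon).2
  obtain ⟨b, l, hbl⟩ := List.exists_cons_of_ne_nil hne
  refine ⟨b, h.prefix_mem ⟨l, ?_⟩ (by simpa [List.append_assoc] using ht)⟩
  rw [hbl]; simp

end Basic

/-- One step of the skew product of the Rauzy graph with `Q`. -/
def RStep (F : Set (List A)) (α : List A → Equiv.Perm Q) (x y : List A × Q) : Prop :=
  ∃ b : A, x.1 ++ [b] ∈ F ∧ y.1 = (x.1 ++ [b]).tail ∧ y.2 = (α [b])⁻¹ x.2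

/-- Reachability in the skew product. -/
def Rch (F : Set (List A)) (α : List A → Equiv.Perm Q) : List A × Q → List A × Q → Prop :=
  Relation.ReflTransGen (RStep F α)

section Reach

variable {F : Set (List A)} {α : List A → Equiv.Perm Q} (h : Ctx F α)
include h

theorem Ctx.rstep_mem {x y : List A × Q} (hx : x.1 ∈ F) (hs : RStep F α x y) :
    y.1 ∈ F ∧ y.1.length = x.1.length := by
  obtain ⟨b, hb, hy1, hy2⟩ := hs
  constructor
  · rw [hy1]; exact h.tail_mem hb
  · rw [hy1]; simp

theorem Ctx.rch_mem {x y : List A × Q} (hx : x.1 ∈ F) (hr : Rch F α x y) :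
    y.1 ∈ F ∧ y.1.length = x.1.length := by
  induction hr with
  | refl => exact ⟨hx, rfl⟩
  | tail hab hbc IH =>
    obtain ⟨h1, h2⟩ := IH
    obtain ⟨h3, h4⟩ := h.rstep_mem h1 hbc
    exact ⟨h3, h4.trans h2⟩

theorem Ctx.rchWord : ∀ (s x : List A) (p : Q), x ++ s ∈ F →
    Rch F α (x, p) ((x ++ s).drop s.length, (α s)⁻¹ p) := by
  intro s
  induction s with
  | nil =>
    intro x p hx
    simp only [List.append_nil, List.length_nil, List.drop_zero, h.a1, inv_one,
      Equiv.Perm.one_apply]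
    exact Relation.ReflTransGen.refl
  | cons b s' IH =>
    intro x p hx
    have hx' : x ++ [b] ++ s' ∈ F := by rwa [List.append_cons] at hx
    have hxb : x ++ [b] ∈ F := h.prefix_mem (List.prefix_append _ _) hx'
    have hxbne : x ++ [b] ≠ [] := by simp
    have h1 : (x ++ [b]).tail ++ s' ∈ F := by
      rw [← List.tail_append_of_ne_nil hxbne]
      exact h.tail_mem hx'
    have hstep : RStep F α (x, p) ((x ++ [b]).tail, (α [b])⁻¹ p) := ⟨b, hxb, rfl, rfl⟩
    have hrest := IH ((x ++ [b]).tail) ((α [b])⁻¹ p) h1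
    have hend : ((x ++ [b]).tail ++ s').drop s'.length = (x ++ (b :: s')).drop (b :: s').length := by
      rw [← List.tail_append_of_ne_nil hxbne, ← List.append_cons, ← List.drop_one,
        List.drop_drop]
      congr 1
      simp [Nat.add_comm]
    have hperm : (α s')⁻¹ ((α [b])⁻¹ p) = (α (b :: s'))⁻¹ p := by
      have : α (b :: s') = α [b] * α s' := by
        rw [← h.aapp]; simp
      rw [this, mul_inv_rev, Equiv.Perm.mul_apply]
    rw [hend, hperm] at hrest
    exact Relation.ReflTransGen.head hstep hrest

/-- Reachability at level 0. -/
theorem Ctx.rch_nil : ∀ (s : List A) (p : Q),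
    Rch F α (([] : List A), p) ([], (α s)⁻¹ p) := by
  intro s
  induction s with
  | nil =>
    intro p
    simp only [h.a1, inv_one, Equiv.Perm.one_apply]
    exact Relation.ReflTransGen.refl
  | cons b s' IH =>
    intro p
    have hstep : RStep F α (([] : List A), p) ([], (α [b])⁻¹ p) :=
      ⟨b, by simpa using h.alph b, by simp, rfl⟩
    have hperm : (α s')⁻¹ ((α [b])⁻¹ p) = (α (b :: s'))⁻¹ p := by
      have : α (b :: s') = α [b] * α s' := by rw [← h.aapp]; simp
      rw [this, mul_inv_rev, Equiv.Perm.mul_apply]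
    rw [← hperm]
    exact Relation.ReflTransGen.head hstep (IH ((α [b])⁻¹ p))

end Reach

section Main

variable {F : Set (List A)} {α : List A → Equiv.Perm Q} (h : Ctx F α)
include h

private theorem drop_helper {z z' t : List A} (hl : z.length = z'.length) :
    (z ++ (t ++ z')).drop (t ++ z').length = z' := by
  have hlen : (t ++ z').length = (z ++ t).length := by
    simp only [List.length_append]
    omega
  rw [hlen, ← List.append_assoc, List.drop_left]

theorem Ctx.strongConn [Fintype A] (htr : ∀ q q' : Q, ∃ t, α t q = q') :
    ∀ m : ℕ, ∀ x y : List A, x ∈ F → y ∈ F → x.length = m → y.length = m →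
      ∀ p q : Q, Rch F α (x, p) (y, q) := by
  intro m
  induction m with
  | zero =>
    intro x y hx hy hxl hyl p q
    obtain rfl : x = [] := List.length_eq_zero_iff.1 hxl
    obtain rfl : y = [] := List.length_eq_zero_iff.1 hyl
    obtain ⟨t, ht⟩ := htr q p
    have : (α t)⁻¹ p = q := by rw [← ht]; simp
    rw [← this]
    exact h.rch_nil t p
  | succ m IH =>
    intro v v' hv hv' hvl hv'l p p'
    classical
    -- the set of vertices of the skew product at level `m+1`
    have hVfin : {z : List A × Q | z.1 ∈ F ∧ z.1.length = m + 1}.Finite := by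
      refine Set.Finite.subset ((List.finite_length_eq A (m+1)).prod Set.finite_univ) ?_
      rintro ⟨z1, z2⟩ ⟨hz1, hz2⟩
      exact ⟨hz2, trivial⟩
    obtain ⟨cbar, hcV, hcmax⟩ := exists_rmax (Rch F α)
      (fun a => Relation.ReflTransGen.refl) (fun hab hbc => hab.trans hbc)
      {z : List A × Q | z.1 ∈ F ∧ z.1.length = m + 1} hVfin ⟨(v, p), hv, hvl⟩
    obtain ⟨hc1, hc2⟩ := hcV
    -- the fiber sets
    set T : List A → Set Q := fun z => {r | Rch F α cbar (z, r)} with hT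
    have hmem : ∀ {z : List A × Q}, Rch F α cbar z → z.1 ∈ F ∧ z.1.length = m + 1 := by
      intro z hr
      obtain ⟨h1, h2⟩ := h.rch_mem hc1 hr
      exact ⟨h1, h2.trans hc2⟩
    have hback : ∀ {z : List A × Q}, Rch F α cbar z → Rch F α z cbar := by
      intro z hr
      exact hcmax z (hmem hr) hr
    have hTword : ∀ z s r, z ++ s ∈ F → r ∈ T z →
        (α s)⁻¹ r ∈ T ((z ++ s).drop s.length) := by
      intro z s r hzs hr
      exact Relation.ReflTransGen.trans hr (h.rchWord s z r hzs)
    have hTne : ∀ z, z ∈ F → z.length = m + 1 → ∃ r, r ∈ T z := by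
      intro z hz hzl
      obtain ⟨t, ht⟩ := h.recur cbar.1 hc1 z hz
      refine ⟨(α (t ++ z))⁻¹ cbar.2, ?_⟩
      have := h.rchWord (t ++ z) cbar.1 cbar.2 (by rwa [List.append_assoc] at ht)
      rwa [drop_helper h (hc2.trans hzl.symm), Prod.mk.eta] at this
    have hTfin : ∀ z, (T z).Finite := fun z => Set.toFinite _
    have hTcard_le : ∀ z z', z ∈ F → z' ∈ F → z.length = m + 1 → z'.length = m + 1 →
        (T z).ncard ≤ (T z').ncard := by
      intro z z' hz hz' hzl hz'l
      obtain ⟨t, ht⟩ := h.recur z hz z' hz'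
      have hsub : (fun r => (α (t ++ z'))⁻¹ r) '' T z ⊆ T z' := by
        rintro - ⟨r, hr, rfl⟩
        have := hTword z (t ++ z') r (by rwa [List.append_assoc] at ht) hr
        rwa [drop_helper h (hzl.trans hz'l.symm)] at this
      calc (T z).ncard = ((fun r => (α (t ++ z'))⁻¹ r) '' T z).ncard :=
            (Set.ncard_image_of_injective _ (Equiv.injective _)).symm
        _ ≤ (T z').ncard := Set.ncard_le_ncard hsub (hTfin z')
    have hTstep : ∀ z b r, z ++ [b] ∈ F → r ∈ T z → (α [b])⁻¹ r ∈ T ((z ++ [b]).tail) := by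
      intro z b r hzb hr
      have := hTword z [b] r hzb hr
      rwa [List.length_singleton, List.drop_one] at this
    have hTstep_eq : ∀ z b, z ∈ F → z.length = m + 1 → z ++ [b] ∈ F →
        (fun r => (α [b])⁻¹ r) '' T z = T ((z ++ [b]).tail) := by
      intro z b hz hzl hzb
      have htl_mem : (z ++ [b]).tail ∈ F := h.tail_mem hzb
      have htl_len : (z ++ [b]).tail.length = m + 1 := by simp [hzl]
      refine Set.eq_of_subset_of_ncard_le ?_ ?_ (hTfin _)
      · rintro - ⟨r, hr, rfl⟩
        exact hTstep z b r hzb hr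
      · rw [Set.ncard_image_of_injective _ (Equiv.injective _)]
        exact hTcard_le _ _ htl_mem hz htl_len hzl
    -- constancy of `T` on the fibers, via connectedness of the extension graphs
    have hfiber : ∀ w, w ∈ F → w.length = m → ∀ c c', c :: w ∈ F → c' :: w ∈ F →
        T (c :: w) = T (c' :: w) := by
      intro w hw hwl c c' hc hc'
      set Φ : {x : Sum A A // ExtVertex F w x} → Set Q := fun x =>
        Sum.elim (fun a => T (a :: w)) (fun b => (fun r => (α [b]) r) '' T (w ++ [b])) x.1
        with hΦ
      have hadj : ∀ u u', (extGraph F w).Adj u u' → Φ u = Φ u' := by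
        have key : ∀ (a b : A), a :: (w ++ [b]) ∈ F →
            T (a :: w) = (fun r => (α [b]) r) '' T (w ++ [b]) := by
          intro a b hab
          have haw : a :: w ∈ F := h.prefix_mem ⟨[b], by simp⟩ hab
          have h1 : (fun r => (α [b])⁻¹ r) '' T (a :: w) = T (w ++ [b]) := by
            have := hTstep_eq (a :: w) b haw (by simp [hwl]) (by simpa using hab)
            simpa using this
          rw [← h1, Set.image_image]
          ext r
          simp [Equiv.Perm.coe_inv]
        intro u u' huu'
        simp only [extGraph, SimpleGraph.fromRel_adj] at huu'
        obtain ⟨hne', hrel⟩ := huu'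
        obtain ⟨x, hx⟩ := u
        obtain ⟨y, hy⟩ := u'
        cases x with
        | inl a =>
          cases y with
          | inl a' => simp only [ExtRel] at hrel; tauto
          | inr b =>
            have hab : a :: (w ++ [b]) ∈ F := by
              simpa only [ExtRel] using hrel.resolve_right (by simp [ExtRel])
            exact key a b hab
        | inr b =>
          cases y with
          | inl a =>
            have hab : a :: (w ++ [b]) ∈ F := by
              simpa only [ExtRel] using hrel.resolve_left (by simp [ExtRel])
            exact (key a b hab).symm
          | inr b' => simp only [ExtRel] at hrel; tauto
      have hwalk : ∀ u u' (pth : (extGraph F w).Walk u u'), Φ u = Φ u' := by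
        intro u u' pth
        induction pth with
        | nil => rfl
        | cons ha _ IHp => exact (hadj _ _ ha).trans IHp
      have hreach := ((h.conn w hw).preconnected ⟨Sum.inl c, hc⟩ ⟨Sum.inl c', hc'⟩)
      obtain ⟨pth⟩ := hreach
      exact hwalk _ _ pth
    -- finding an admissible left extension of `x ++ [b]`
    have hex_edge : ∀ x b c0, x ∈ F → x ++ [b] ∈ F → c0 :: x ∈ F →
        ∃ cstar, cstar :: (x ++ [b]) ∈ F := by
      intro x b c0 hx hxb hc0
      have hreach := ((h.conn x hx).preconnected ⟨Sum.inr b, hxb⟩ ⟨Sum.inl c0, hc0⟩)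
      obtain ⟨pth⟩ := hreach
      cases pth with
      | cons ha _ =>
        rename_i u _
        simp only [extGraph, SimpleGraph.fromRel_adj] at ha
        obtain ⟨x', hx'⟩ := u
        cases x' with
        | inl cstar =>
          refine ⟨cstar, ?_⟩
          simpa only [ExtRel] using ha.2.resolve_left (by simp [ExtRel])
        | inr b' =>
          exfalso
          have := ha.2
          simp only [ExtRel] at this
          tauto
    -- propagation of membership in the fibers along level-m reachability
    have hprop : ∀ (e₁ e₂ : List A × Q), Rch F α e₁ e₂ → e₁.1 ∈ F → e₁.1.length = m →
        (∃ c, c :: e₁.1 ∈ F ∧ e₁.2 ∈ T (c :: e₁.1)) →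
        (e₂.1 ∈ F ∧ e₂.1.length = m ∧ ∃ d, d :: e₂.1 ∈ F ∧ e₂.2 ∈ T (d :: e₂.1)) := by
      intro e₁ e₂ hr
      induction hr with
      | refl => intro h1 h2 h3; exact ⟨h1, h2, h3⟩
      | tail hab hbc IHp =>
        intro h1 h2 h3
        obtain ⟨hz1, hz2, c, hc, hcT⟩ := IHp h1 h2 h3
        rename_i z e₂'
        obtain ⟨b, hzb, he1, he2⟩ := hbc
        obtain ⟨cstar, hcstar⟩ := hex_edge z.1 b c hz1 hzb hc
        have hcsz : cstar :: z.1 ∈ F := h.prefix_mem ⟨[b], by simp⟩ hcstar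
        have hzT : z.2 ∈ T (cstar :: z.1) := by
          rw [← hfiber z.1 hz1 hz2 c cstar hc hcsz]
          exact hcT
        have hstep2 : RStep F α (cstar :: z.1, z.2) (z.1 ++ [b], (α [b])⁻¹ z.2) := by
          refine ⟨b, ?_, ?_, rfl⟩
          · simpa using hcstar
          · simp
        have hq : e₂'.2 ∈ T (z.1 ++ [b]) := by
          rw [he2]
          exact Relation.ReflTransGen.tail hzT hstep2
        have hne2 : z.1 ++ [b] ≠ [] := by simp
        refine ⟨?_, ?_, (z.1 ++ [b]).head hne2, ?_, ?_⟩
        · rw [he1]; exact h.tail_mem hzb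
        · rw [he1]; simp [hz2]
        · rw [he1, List.cons_head_tail]; exact hzb
        · rw [he1, List.cons_head_tail]; exact hq
    -- every point of the level-(m+1) skew product is reachable from cbar
    have hinT : ∀ z r, z ∈ F → z.length = m + 1 → r ∈ T z := by
      intro z r hz hzl
      have hzne : z ≠ [] := by intro hcon; rw [hcon] at hzl; simp at hzl
      have hcne : cbar.1 ≠ [] := by intro hcon; rw [hcon] at hc2; simp at hc2
      have hct : cbar.1.tail ∈ F := h.tail_mem hc1
      have hctl : cbar.1.tail.length = m := by
        rw [List.length_tail, hc2]; omega
      have hzt : z.tail ∈ F := h.tail_mem hz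
      have hztl : z.tail.length = m := by rw [List.length_tail, hzl]; omega
      have hseed : cbar.2 ∈ T (cbar.1.head hcne :: cbar.1.tail) := by
        rw [List.cons_head_tail]
        show Rch F α cbar (cbar.1, cbar.2)
        rw [Prod.mk.eta]
        exact Relation.ReflTransGen.refl
      have hrch := IH cbar.1.tail z.tail hct hzt hctl hztl cbar.2 r
      obtain ⟨-, -, d, hd, hdT⟩ := hprop (cbar.1.tail, cbar.2) (z.tail, r) hrch hct hctl
        ⟨cbar.1.head hcne, by rw [List.cons_head_tail]; exact hc1, hseed⟩
      have := hfiber z.tail hzt hztl d (z.head hzne) hd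
        (by rw [List.cons_head_tail]; exact hz)
      rw [this, List.cons_head_tail] at hdT
      exact hdT
    have h1 : Rch F α cbar (v, p) := hinT v p hv hvl
    have h2 : Rch F α cbar (v', p') := hinT v' p' hv' hv'l
    exact (hback h1).trans h2

end Main

/-- The deterministic follower set of `w` in `F`. -/
def FolS (F : Set (List A)) (α : List A → Equiv.Perm Q) (q₀ : Q) (w : List A) : Set Q :=
  {p | ∃ y, w ++ y ∈ F ∧ α y q₀ = p}

section Fol

variable {F : Set (List A)} {α : List A → Equiv.Perm Q} (h : Ctx F α) (q₀ : Q)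
include h

theorem Ctx.fol_univ [Fintype A] (htr : ∀ q q' : Q, ∃ t, α t q = q')
    (hur : ∀ u ∈ F, ∃ n : ℕ, ∀ w ∈ F, n ≤ w.length → u <:+: w) :
    ∀ w ∈ F, FolS F α q₀ w = Set.univ := by
  classical
  have hq0mem : ∀ w ∈ F, q₀ ∈ FolS F α q₀ w := fun w hw =>
    ⟨[], by simpa using hw, by simp [h.a1]⟩
  have hfolfin : ∀ w, (FolS F α q₀ w).Finite := fun w => Set.toFinite _
  set N := {n | ∃ w ∈ F, (FolS F α q₀ w).ncard = n} with hN
  have hNne : N.Nonempty := ⟨_, [], h.nil_mem, rfl⟩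
  obtain ⟨u, huF, hucard⟩ := Nat.sInf_mem hNne
  set m₀ := sInf N with hm₀
  have hge : ∀ w ∈ F, m₀ ≤ (FolS F α q₀ w).ncard := fun w hw => Nat.sInf_le ⟨w, hw, rfl⟩
  -- right extension of a minimal word
  have hstepr : ∀ w b, w ∈ F → (FolS F α q₀ w).ncard = m₀ → w ++ [b] ∈ F →
      (FolS F α q₀ (w ++ [b])).ncard = m₀ ∧
        (fun p => (α [b]) p) '' FolS F α q₀ (w ++ [b]) = FolS F α q₀ w := by
    intro w b hw hwc hwb
    have hsub : (fun p => (α [b]) p) '' FolS F α q₀ (w ++ [b]) ⊆ FolS F α q₀ w := by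
      rintro - ⟨p, ⟨y, hy, rfl⟩, rfl⟩
      refine ⟨b :: y, by rwa [List.append_cons], ?_⟩
      have : α (b :: y) = α [b] * α y := by rw [← h.aapp]; simp
      rw [this, Equiv.Perm.mul_apply]
    have himgc : ((fun p => (α [b]) p) '' FolS F α q₀ (w ++ [b])).ncard
        = (FolS F α q₀ (w ++ [b])).ncard :=
      Set.ncard_image_of_injective _ (Equiv.injective _)
    have heq : (fun p => (α [b]) p) '' FolS F α q₀ (w ++ [b]) = FolS F α q₀ w := by
      refine Set.eq_of_subset_of_ncard_le hsub ?_ (hfolfin w)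
      rw [himgc, hwc]
      exact hge _ hwb
    refine ⟨?_, heq⟩
    rw [← himgc, heq, hwc]
  -- left extension of a minimal word
  have hstepl : ∀ w a, w ∈ F → (FolS F α q₀ w).ncard = m₀ → a :: w ∈ F →
      FolS F α q₀ (a :: w) = FolS F α q₀ w ∧ (FolS F α q₀ (a :: w)).ncard = m₀ := by
    intro w a hw hwc haw
    have hsub : FolS F α q₀ (a :: w) ⊆ FolS F α q₀ w := by
      rintro - ⟨y, hy, rfl⟩
      refine ⟨y, ?_, rfl⟩
      have : (a :: w ++ y).tail ∈ F := h.tail_mem hy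
      simpa using this
    have heq : FolS F α q₀ (a :: w) = FolS F α q₀ w := by
      refine Set.eq_of_subset_of_ncard_le hsub ?_ (hfolfin w)
      rw [hwc]
      exact hge _ haw
    exact ⟨heq, by rw [heq, hwc]⟩
  -- propagation of minimality
  have hright : ∀ (y z : List A), z ∈ F → (FolS F α q₀ z).ncard = m₀ → z ++ y ∈ F →
      (FolS F α q₀ (z ++ y)).ncard = m₀ := by
    intro y
    induction y with
    | nil => intro z hz hzc hzy; simpa using hzc
    | cons b y' IHy =>
      intro z hz hzc hzy
      rw [List.append_cons] at hzy ⊢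
      have hzb : z ++ [b] ∈ F := h.prefix_mem ⟨y', by rw [List.append_assoc]⟩ hzy
      exact IHy (z ++ [b]) hzb (hstepr z b hz hzc hzb).1 hzy
  have hleft : ∀ (x z : List A), z ∈ F → (FolS F α q₀ z).ncard = m₀ → x ++ z ∈ F →
      (FolS F α q₀ (x ++ z)).ncard = m₀ := by
    intro x
    induction x with
    | nil => intro z hz hzc hxz; simpa using hzc
    | cons a x' IHx =>
      intro z hz hzc hxz
      rw [List.cons_append] at hxz ⊢
      have hx'z : x' ++ z ∈ F := by
        have := h.tail_mem hxz
        simpa using this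
      have := IHx z hz hzc hx'z
      exact (hstepl (x' ++ z) a hx'z this hxz).2
  have hcontains : ∀ w ∈ F, u <:+: w → (FolS F α q₀ w).ncard = m₀ := by
    intro w hw ⟨x, y, hxy⟩
    have hxw : x ++ u ∈ F := h.prefix_mem ⟨y, by rw [← hxy, List.append_assoc]⟩ hw
    have h1 : (FolS F α q₀ (x ++ u)).ncard = m₀ := hleft x u huF hucard hxw
    have h2 := hright y (x ++ u) hxw h1 (by rw [List.append_assoc, ← List.append_assoc, hxy]; exact hw)
    rwa [List.append_assoc, ← List.append_assoc, hxy] at h2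
  -- uniform recurrence: all long words are minimal
  obtain ⟨n₀, hn₀⟩ := hur u huF
  set m := max n₀ 1 with hm
  have hallmin : ∀ w ∈ F, w.length = m → (FolS F α q₀ w).ncard = m₀ := by
    intro w hw hwl
    exact hcontains w hw (hn₀ w hw (by rw [hwl]; exact le_max_left _ _))
  -- the section rule along one skew step
  have hsec : ∀ e₁ e₂ : List A × Q, RStep F α e₁ e₂ → e₁.1 ∈ F → e₁.1.length = m →
      e₁.2 ∈ FolS F α q₀ e₁.1 → e₂.2 ∈ FolS F α q₀ e₂.1 := by
    intro e₁ e₂ hst h1 h2 h3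
    obtain ⟨b, hb, he1, he2⟩ := hst
    have hc1 : (FolS F α q₀ e₁.1).ncard = m₀ := hallmin _ h1 h2
    have himg := (hstepr e₁.1 b h1 hc1 hb).2
    have hmem2 : e₁.2 ∈ (fun p => (α [b]) p) '' FolS F α q₀ (e₁.1 ++ [b]) := by
      rw [himg]; exact h3
    obtain ⟨p', hp', hpe⟩ := hmem2
    have hp'' : e₂.2 ∈ FolS F α q₀ (e₁.1 ++ [b]) := by
      rw [he2, ← hpe]
      simpa using hp'
    have hne : e₁.1 ++ [b] ≠ [] := by simp
    have htl : (e₁.1 ++ [b]).tail ∈ F := h.tail_mem hb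
    have htll : (e₁.1 ++ [b]).tail.length = m := by simp [h2]
    have hmintl : (FolS F α q₀ ((e₁.1 ++ [b]).tail)).ncard = m₀ := hallmin _ htl htll
    have hhead : (e₁.1 ++ [b]).head hne :: (e₁.1 ++ [b]).tail ∈ F := by
      rw [List.cons_head_tail]; exact hb
    have heq := (hstepl _ ((e₁.1 ++ [b]).head hne) htl hmintl hhead).1
    rw [← List.cons_head_tail (l := e₁.1 ++ [b]) hne, heq] at hp''
    rw [he1]
    exact hp''
  have hrch : ∀ e₁ e₂ : List A × Q, Rch F α e₁ e₂ → e₁.1 ∈ F → e₁.1.length = m →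
      e₁.2 ∈ FolS F α q₀ e₁.1 →
      (e₂.1 ∈ F ∧ e₂.1.length = m ∧ e₂.2 ∈ FolS F α q₀ e₂.1) := by
    intro e₁ e₂ hr
    induction hr with
    | refl => intro h1 h2 h3; exact ⟨h1, h2, h3⟩
    | tail hab hbc IHr =>
      intro h1 h2 h3
      obtain ⟨h4, h5, h6⟩ := IHr h1 h2 h3
      obtain ⟨h7, h8⟩ := h.rstep_mem h4 hbc
      exact ⟨h7, h8.trans h5, hsec _ _ hbc h4 h5 h6⟩
  obtain ⟨x₀, hx₀, hx₀l⟩ := h.exists_len m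
  have hfull : FolS F α q₀ x₀ = Set.univ := by
    apply Set.eq_univ_of_forall
    intro q
    have hrch2 := h.strongConn htr m x₀ x₀ hx₀ hx₀ hx₀l hx₀l q₀ q
    exact (hrch (x₀, q₀) (x₀, q) hrch2 hx₀ hx₀l (hq0mem x₀ hx₀)).2.2
  have hm₀card : m₀ = (Set.univ : Set Q).ncard := by
    rw [← hallmin x₀ hx₀ hx₀l, hfull]
  intro w hw
  refine Set.eq_of_subset_of_ncard_le (Set.subset_univ _) ?_ Set.finite_univ
  rw [← hm₀card]
  exact hge w hw

end Fol

section Parse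

variable {A : Type}

/-- Greedy decomposition with respect to `X` exists. -/
theorem greedy_exists (X : Set (List A)) (hX1 : ∀ z ∈ X, z ≠ []) :
    ∀ r : List A, ∃ (l : List (List A)) (u : List A),
      (∀ z ∈ l, z ∈ X) ∧ l.flatten ++ u = r ∧ ¬ ∃ s ∈ X, s <+: u := by
  classical
  suffices H : ∀ n (r : List A), r.length ≤ n → ∃ (l : List (List A)) (u : List A),
      (∀ z ∈ l, z ∈ X) ∧ l.flatten ++ u = r ∧ ¬ ∃ s ∈ X, s <+: u by
    exact fun r => H r.length r le_rfl
  intro n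
  induction n with
  | zero =>
    intro r hr
    have : r = [] := by
      cases r with
      | nil => rfl
      | cons a t => simp at hr
    subst this
    refine ⟨[], [], by simp, by simp, ?_⟩
    rintro ⟨s, hs, hpre⟩
    exact hX1 s hs (List.prefix_nil.1 hpre)
  | succ n IHn =>
    intro r hr
    by_cases hc : ∃ z ∈ X, z <+: r
    · obtain ⟨z, hz, r', rfl⟩ := hc
      have hzlen : 1 ≤ z.length := by
        cases z with
        | nil => exact (hX1 [] hz rfl).elim
        | cons a t => simp
      have hr' : r'.length ≤ n := by
        simp only [List.length_append] at hr
        omega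
      obtain ⟨l, u, hl, hlu, hu⟩ := IHn r' hr'
      refine ⟨z :: l, u, ?_, by simp [List.flatten_cons, List.append_assoc, hlu], hu⟩
      intro z' hz'
      rcases List.mem_cons.1 hz' with rfl | hz''
      · exact hz
      · exact hl z' hz''
    · exact ⟨[], r, by simp, by simp, hc⟩

/-- Greedy decomposition with respect to a prefix antichain is unique. -/
theorem greedy_unique (X : Set (List A)) (hX1 : ∀ z ∈ X, z ≠ [])
    (hX2 : ∀ u ∈ X, ∀ v ∈ X, u <+: v → u = v) :
    ∀ (l l' : List (List A)) (u u' : List A), (∀ z ∈ l, z ∈ X) → (∀ z ∈ l', z ∈ X) →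
      (¬ ∃ s ∈ X, s <+: u) → (¬ ∃ s ∈ X, s <+: u') →
      l.flatten ++ u = l'.flatten ++ u' → l.flatten = l'.flatten ∧ u = u' := by
  intro l
  induction l with
  | nil =>
    intro l' u u' hl hl' hu hu' heq
    cases l' with
    | nil => simpa using heq
    | cons z' r' =>
      exfalso
      apply hu
      refine ⟨z', hl' z' (by simp), ?_⟩
      rw [List.flatten_nil, List.nil_append] at heq
      rw [heq, List.flatten_cons, List.append_assoc]
      exact List.prefix_append _ _
  | cons z r IHl =>
    intro l' u u' hl hl' hu hu' heq
    cases l' with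
    | nil =>
      exfalso
      apply hu'
      refine ⟨z, hl z (by simp), ?_⟩
      rw [List.flatten_nil, List.nil_append] at heq
      rw [← heq, List.flatten_cons, List.append_assoc]
      exact List.prefix_append _ _
    | cons z' r' =>
      have hzz' : z = z' := by
        have h1 : z <+: z ++ (r.flatten ++ u) := List.prefix_append _ _
        have h2 : z' <+: z ++ (r.flatten ++ u) := by
          rw [← List.append_assoc, ← List.flatten_cons, heq, List.flatten_cons,
            List.append_assoc]
          exact List.prefix_append _ _
        rcases List.prefix_or_prefix_of_prefix h1 h2 with hp | hp
        · exact hX2 z (hl z (by simp)) z' (hl' z' (by simp)) hp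
        · exact (hX2 z' (hl' z' (by simp)) z (hl z (by simp)) hp).symm
      subst hzz'
      have heq' : r.flatten ++ u = r'.flatten ++ u' := by
        apply List.append_cancel_left (as := z)
        rw [← List.append_assoc, ← List.append_assoc]
        simpa [List.flatten_cons, List.append_assoc] using heq
      obtain ⟨h1, h2⟩ := IHl r' u u' (fun z' hz' => hl z' (by simp [hz']))
        (fun z'' hz'' => hl' z'' (by simp [hz''])) hu hu' heq'
      exact ⟨by rw [List.flatten_cons, List.flatten_cons, h1], h2⟩

open PaperDefs in
/-- The number of parses equals the number of prefixes with no suffix in `Z'`. -/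
theorem delta_eq_good (X Z' : Set (List A)) (hX1 : ∀ z ∈ X, z ≠ [])
    (hX2 : ∀ u ∈ X, ∀ v ∈ X, u <+: v → u = v) (w : List A)
    (hiff : ∀ v, v <+: w → ((∃ s ∈ X, s <:+ v) ↔ (∃ s ∈ Z', s <:+ v))) :
    delta X w = {v | v <+: w ∧ ¬ ∃ s ∈ Z', s <:+ v}.ncard := by
  classical
  have hbij : Set.BijOn (fun p : List A × List A × List A => p.1)
      {p | IsParse X w p} {v | v <+: w ∧ ¬ ∃ s ∈ Z', s <:+ v} := by
    refine ⟨?_, ?_, ?_⟩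
    · rintro ⟨v, x, u⟩ ⟨heq, hv, hx, hu⟩
      have hpre : v <+: w := ⟨x ++ u, by rw [← List.append_assoc]; exact heq⟩
      exact ⟨hpre, fun hcon => hv ((hiff v hpre).2 hcon)⟩
    · rintro ⟨v, x, u⟩ ⟨heq, hv, ⟨lx, hlx, hflx⟩, hu⟩ ⟨v', x', u'⟩
        ⟨heq', hv', ⟨lx', hlx', hflx'⟩, hu'⟩ h1
      simp only at h1
      subst h1
      have hcat : x ++ u = x' ++ u' := by
        apply List.append_cancel_left (as := v)
        rw [← List.append_assoc, ← List.append_assoc, heq, heq']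
      subst hflx
      subst hflx'
      obtain ⟨hfl, hfu⟩ := greedy_unique X hX1 hX2 lx lx' u u' hlx hlx' hu hu' hcat
      simp [hfl, hfu]
    · rintro v ⟨⟨rest, hrest⟩, hgood⟩
      obtain ⟨l, u, hl, hlu, hu⟩ := greedy_exists X hX1 rest
      refine ⟨(v, l.flatten, u), ⟨?_, ?_, ⟨l, hl, rfl⟩, hu⟩, rfl⟩
      · rw [List.append_assoc, hlu, hrest]
      · intro hcon
        exact hgood ((hiff v ⟨rest, hrest⟩).1 hcon)
  rw [delta, ← hbij.image_eq, Set.ncard_image_of_injOn hbij.injOn]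

end Parse

section VsSec

variable {A : Type} {Q : Type}

/-- The set of points visited while reading `w`. -/
def Vs (α : List A → Equiv.Perm Q) (q₀ : Q) (w : List A) : Set Q :=
  (fun v => (α v) q₀) '' {v | v <+: w}

theorem minlen {S : Set (List A)} (hS : S.Nonempty) :
    ∃ s ∈ S, ∀ s' ∈ S, s.length ≤ s'.length := by
  obtain ⟨x, hx⟩ := hS
  obtain ⟨s, hs, hsl⟩ := Nat.sInf_mem (s := {n | ∃ s ∈ S, s.length = n})
    ⟨x.length, x, hx, rfl⟩
  exact ⟨s, hs, fun s' hs' => by rw [hsl]; exact Nat.sInf_le ⟨s', hs', rfl⟩⟩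

variable {Z : Set (List A)} {α : List A → Equiv.Perm Q} {q₀ : Q}
  (hZchar : ∀ s, s ∈ Z ↔ ((α s) q₀ = q₀ ∧ s ≠ [] ∧
    ¬ ∃ u' v' : List A, u' ≠ [] ∧ v' ≠ [] ∧ (α u') q₀ = q₀ ∧ (α v') q₀ = q₀ ∧ s = u' ++ v'))
  (haapp : ∀ u v, α (u ++ v) = α u * α v)

include hZchar in
theorem exZsuffix {v : List A} (hex : ∃ s, s ≠ [] ∧ s <:+ v ∧ (α s) q₀ = q₀) :
    ∃ s ∈ Z, s <:+ v := by
  obtain ⟨s, ⟨hs1, hs2, hs3⟩, hmin⟩ :=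
    minlen (S := {s | s ≠ [] ∧ s <:+ v ∧ (α s) q₀ = q₀}) hex
  refine ⟨s, (hZchar s).2 ⟨hs3, hs1, ?_⟩, hs2⟩
  rintro ⟨u', v', hu', hv', hau, hav, rfl⟩
  have hv's : v' <:+ v := (List.suffix_append u' v').trans hs2
  have := hmin v' ⟨hv', hv's, hav⟩
  have h1 : 1 ≤ u'.length := by
    cases u' with
    | nil => exact (hu' rfl).elim
    | cons a t => simp
  simp only [List.length_append] at this
  omega

include hZchar haapp in
theorem noZsuffix_iff {v : List A} :
    (¬ ∃ s ∈ Z, s <:+ v) ↔ ∀ v', v' <+: v → v' ≠ v → (α v') q₀ ≠ (α v) q₀ := by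
  constructor
  · intro hno v' hpre hne heq
    obtain ⟨s, hs⟩ := hpre
    have hsne : s ≠ [] := by
      rintro rfl
      exact hne (by rw [← hs, List.append_nil])
    have hsq : (α s) q₀ = q₀ := by
      have hvs : α v = α v' * α s := by rw [← haapp, hs]
      have : (α v') ((α s) q₀) = (α v') q₀ := by
        rw [← Equiv.Perm.mul_apply, ← hvs, heq]
      exact (α v').injective this
    obtain ⟨z, hz, hzs⟩ := exZsuffix hZchar ⟨s, hsne, ⟨v', hs⟩, hsq⟩
    exact hno ⟨z, hz, hzs⟩
  · rintro hall ⟨z, hzZ, x, hx⟩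
    obtain ⟨hzq, hzne, -⟩ := (hZchar z).1 hzZ
    have hxpre : x <+: v := ⟨z, hx⟩
    have hxne : x ≠ v := by
      rintro rfl
      have : x ++ z = x ++ [] := by rw [List.append_nil]; exact hx
      exact hzne (List.append_cancel_left this)
    refine hall x hxpre hxne ?_
    have hvs : α v = α x * α z := by rw [← haapp, hx]
    rw [hvs, Equiv.Perm.mul_apply, hzq]

include hZchar haapp in
theorem good_eq_Vs (w : List A) :
    {v | v <+: w ∧ ¬ ∃ s ∈ Z, s <:+ v}.ncard = (Vs α q₀ w).ncard := by
  classical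
  have hbij : Set.BijOn (fun v => (α v) q₀)
      {v | v <+: w ∧ ¬ ∃ s ∈ Z, s <:+ v} (Vs α q₀ w) := by
    refine ⟨?_, ?_, ?_⟩
    · rintro v ⟨hpre, -⟩
      exact ⟨v, hpre, rfl⟩
    · rintro v₁ ⟨hp₁, hg₁⟩ v₂ ⟨hp₂, hg₂⟩ heq
      simp only at heq
      rcases List.prefix_or_prefix_of_prefix hp₁ hp₂ with hp | hp
      · by_contra hne
        exact (noZsuffix_iff hZchar haapp).1 hg₂ v₁ hp hne heq
      · by_contra hne
        exact (noZsuffix_iff hZchar haapp).1 hg₁ v₂ hp (fun hc => hne hc.symm) heq.symm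
    · rintro - ⟨v, hv, rfl⟩
      obtain ⟨v', ⟨hv'p, hv'q⟩, hmin⟩ :=
        minlen (S := {x | x <+: w ∧ (α x) q₀ = (α v) q₀}) ⟨v, hv, rfl⟩
      refine ⟨v', ⟨hv'p, ?_⟩, hv'q⟩
      rw [noZsuffix_iff hZchar haapp]
      intro x hxpre hxne heq
      have hxw : x <+: w := hxpre.trans hv'p
      have hxlt : x.length < v'.length := by
        refine lt_of_le_of_ne hxpre.length_le fun hlen => ?_
        exact hxne (hxpre.eq_of_length_le (le_of_eq hlen.symm))
      have := hmin x ⟨hxw, by rw [heq, hv'q]⟩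
      omega
  rw [← hbij.image_eq, Set.ncard_image_of_injOn hbij.injOn]

theorem Vs_mono (w y : List A) : Vs α q₀ w ⊆ Vs α q₀ (w ++ y) := by
  rintro - ⟨v, hv, rfl⟩
  exact ⟨v, hv.trans (List.prefix_append _ _), rfl⟩

include haapp in
theorem Vs_snoc (w y : List A) : (α (w ++ y)) q₀ ∈ Vs α q₀ (w ++ y) :=
  ⟨w ++ y, List.prefix_rfl, rfl⟩

end VsSec

section Cover

variable {A : Type} {Q : Type} [Fintype Q] {α : List A → Equiv.Perm Q} {q₀ : Q}

theorem cover_all (haapp : ∀ u v, α (u ++ v) = α u * α v)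
    (htr : ∀ q q' : Q, ∃ t : List A, (α t) q = q') :
    ∃ w : List A, Vs α q₀ w = Set.univ := by
  classical
  suffices H : ∀ S : Finset Q, ∃ w, ∀ q ∈ S, q ∈ Vs α q₀ w by
    obtain ⟨w, hw⟩ := H Finset.univ
    exact ⟨w, Set.eq_univ_of_forall fun q => hw q (Finset.mem_univ q)⟩
  intro S
  induction S using Finset.induction_on with
  | empty => exact ⟨[], by simp⟩
  | @insert q S' hnotin IH =>
    obtain ⟨w, hw⟩ := IH
    obtain ⟨y, hy⟩ := htr q₀ ((α w)⁻¹ q)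
    refine ⟨w ++ y, ?_⟩
    intro q' hq'
    rcases Finset.mem_insert.1 hq' with rfl | hq''
    · have hval : (α (w ++ y)) q₀ = q' := by
        rw [haapp, Equiv.Perm.mul_apply, hy, Equiv.Perm.coe_inv, Equiv.apply_symm_apply]
      exact hval ▸ ⟨w ++ y, List.prefix_rfl, rfl⟩
    · exact Vs_mono w y (hw q' hq'')

theorem cover_F {F : Set (List A)} (hnil : ([] : List A) ∈ F)
    (haapp : ∀ u v, α (u ++ v) = α u * α v)
    (hfol : ∀ w ∈ F, FolS F α q₀ w = Set.univ) :
    ∃ w ∈ F, Vs α q₀ w = Set.univ := by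
  classical
  suffices H : ∀ S : Finset Q, ∃ w ∈ F, ∀ q ∈ S, q ∈ Vs α q₀ w by
    obtain ⟨w, hwF, hw⟩ := H Finset.univ
    exact ⟨w, hwF, Set.eq_univ_of_forall fun q => hw q (Finset.mem_univ q)⟩
  intro S
  induction S using Finset.induction_on with
  | empty => exact ⟨[], hnil, by simp⟩
  | @insert q S' hnotin IH =>
    obtain ⟨w, hwF, hw⟩ := IH
    have hmem : (α w)⁻¹ q ∈ FolS F α q₀ w := by
      rw [hfol w hwF]; trivial
    obtain ⟨y, hwy, hyq⟩ := hmem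
    refine ⟨w ++ y, hwy, ?_⟩
    intro q' hq'
    rcases Finset.mem_insert.1 hq' with rfl | hq''
    · have hval : (α (w ++ y)) q₀ = q' := by
        rw [haapp, Equiv.Perm.mul_apply, hyq, Equiv.Perm.coe_inv, Equiv.apply_symm_apply]
      exact hval ▸ ⟨w ++ y, List.prefix_rfl, rfl⟩
    · exact Vs_mono w y (hw q' hq'')

end Cover

end Stmt11Aux
open PaperDefs in
theorem stmt_11 {A : Type} [Fintype A]
    (Z F : Set (List A)) (hZ : IsGroupCode Z)
    (hF : UniformlyRecurrent F) (hTree : TreeSet F) (hAlph : AlphabetIs F) :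
    Fdeg (Z ∩ F) F = deg Z := by
  classical
  obtain ⟨hpc, Q, fQ, q₀, α, ha1, haapp, htrans, hstar, hZeq⟩ := hZ
  letI := fQ
  obtain ⟨⟨hfac, hFne, hFne2, hrec⟩, hur⟩ := hF
  have hexne : ∃ w ∈ F, w ≠ [] := by
    by_contra hcon
    push_neg at hcon
    apply hFne2
    obtain ⟨w0, hw0⟩ := hFne
    have h0 : ([] : List A) ∈ F := hcon w0 hw0 ▸ hw0
    ext x
    simp only [Set.mem_singleton_iff]
    exact ⟨fun hx => hcon x hx, fun hx => hx ▸ h0⟩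
  have hctx : Stmt11Aux.Ctx F α :=
    ⟨hfac, hrec, hexne, fun w hw => (hTree w hw).isConnected, hAlph, ha1, haapp⟩
  have hZchar : ∀ s, s ∈ Z ↔ ((α s) q₀ = q₀ ∧ s ≠ [] ∧
      ¬ ∃ u' v' : List A, u' ≠ [] ∧ v' ≠ [] ∧ (α u') q₀ = q₀ ∧ (α v') q₀ = q₀ ∧
        s = u' ++ v') := by
    intro s
    rw [hZeq]
    exact Iff.rfl
  have hXF1 : ∀ z ∈ Z ∩ F, z ≠ [] := fun z hz => hpc.2.1 z hz.1
  have hXF2 : ∀ u ∈ Z ∩ F, ∀ v ∈ Z ∩ F, u <+: v → u = v :=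
    fun u hu v hv => hpc.2.2 u hu.1 v hv.1
  have hdZ : ∀ w, delta Z w = (Stmt11Aux.Vs α q₀ w).ncard := by
    intro w
    rw [Stmt11Aux.delta_eq_good Z Z hpc.2.1 hpc.2.2 w (fun v _ => Iff.rfl),
      Stmt11Aux.good_eq_Vs hZchar haapp w]
  have hdZF : ∀ w ∈ F, delta (Z ∩ F) w = (Stmt11Aux.Vs α q₀ w).ncard := by
    intro w hw
    have hiff : ∀ v, v <+: w → ((∃ s ∈ Z ∩ F, s <:+ v) ↔ (∃ s ∈ Z, s <:+ v)) := by
      intro v hv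
      constructor
      · rintro ⟨s, hs, hss⟩
        exact ⟨s, hs.1, hss⟩
      · rintro ⟨s, hs, hss⟩
        exact ⟨s, ⟨hs, hfac w hw s (hss.isInfix.trans hv.isInfix)⟩, hss⟩
    rw [Stmt11Aux.delta_eq_good (Z ∩ F) Z hXF1 hXF2 w hiff,
      Stmt11Aux.good_eq_Vs hZchar haapp w]
  set n := (Set.univ : Set Q).ncard with hn
  have hle : ∀ w : List A, ((Stmt11Aux.Vs α q₀ w).ncard : ℕ∞) ≤ (n : ℕ∞) :=
    fun w => Nat.cast_le.2 (Set.ncard_le_ncard (Set.subset_univ _) Set.finite_univ)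
  have hfolu := hctx.fol_univ q₀ htrans hur
  have hcovF : ∃ w ∈ F, Stmt11Aux.Vs α q₀ w = Set.univ :=
    Stmt11Aux.cover_F hctx.nil_mem haapp hfolu
  have hcovA : ∃ w : List A, Stmt11Aux.Vs α q₀ w = Set.univ :=
    Stmt11Aux.cover_all haapp htrans
  have e1 : Fdeg (Z ∩ F) F = (n : ℕ∞) := by
    unfold PaperDefs.Fdeg
    apply le_antisymm
    · exact iSup₂_le fun w hw => by rw [hdZF w hw]; exact hle w
    · obtain ⟨w, hwF, hwV⟩ := hcovF
      have hh : ((delta (Z ∩ F) w : ℕ) : ℕ∞) = (n : ℕ∞) := by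
        rw [hdZF w hwF, hwV]
      rw [← hh]
      exact le_iSup₂ (f := fun (w : List A) (_ : w ∈ F) => ((delta (Z ∩ F) w : ℕ) : ℕ∞)) w hwF
  have e2 : deg Z = (n : ℕ∞) := by
    unfold PaperDefs.deg PaperDefs.Fdeg
    apply le_antisymm
    · exact iSup₂_le fun w _ => by rw [hdZ w]; exact hle w
    · obtain ⟨w, hwV⟩ := hcovA
      have hh : ((delta Z w : ℕ) : ℕ∞) = (n : ℕ∞) := by
        rw [hdZ w, hwV]
      rw [← hh]
      exact le_iSup₂ (f := fun (w : List A) (_ : w ∈ Set.univ) => ((delta Z w : ℕ) : ℕ∞)) w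
        (Set.mem_univ w)
  rw [e1, e2]
end

section
/- Let A be a finite alphabet and let F be a uniformly recurrent connected subset of A* with alphabet A. Then for every u ∈ F, the image of the set of first return words R_F(u) under the canonical monoid homomorphism from A* to the free group F(A) on A generates F(A) as a group. -/
namespace ReturnProofAux
open PaperDefs

variable {A : Type}

/-- The canonical map `A* → F(A)`. -/
abbrev fg (w : List A) : FreeGroup A := (w.map FreeGroup.of).prod

lemma fg_append (v w : List A) : fg (v ++ w) = fg v * fg w := by
  simp [fg]

lemma fg_nil : fg ([] : List A) = 1 := rfl

lemma fg_singleton (a : A) : fg [a] = FreeGroup.of a := by simp [fg]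

/-- Generalized walks in the Rauzy graph of order `n` of `F`, with labels in the
free group. Vertices are words of length `n` of `F`; an edge is a word
`p ++ [b]` of length `n+1` of `F`, from `p` to `(p ++ [b]).drop 1`, labeled by
`FreeGroup.of b`; walks may traverse edges in both directions. -/
inductive GWalk (F : Set (List A)) (n : ℕ) : List A → List A → FreeGroup A → Prop
  | nil (x : List A) (hx : x ∈ F) (hl : x.length = n) : GWalk F n x x 1
  | fwd {x p : List A} {g : FreeGroup A} (b : A) (hw : GWalk F n x p g)
      (hpb : p ++ [b] ∈ F) : GWalk F n x ((p ++ [b]).drop 1) (g * FreeGroup.of b)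
  | bwd {x q : List A} {g : FreeGroup A} (b : A) (hw : GWalk F n x ((q ++ [b]).drop 1) g)
      (hqb : q ++ [b] ∈ F) : GWalk F n x q (g * (FreeGroup.of b)⁻¹)

variable {F : Set (List A)} {n : ℕ}

lemma GWalk.cast {x y : List A} {g g' : FreeGroup A} (h : GWalk F n x y g) (hg : g = g') :
    GWalk F n x y g' := hg ▸ h

lemma GWalk.ends (hFac : Factorial F) {x y g} (h : GWalk F n x y g) :
    (x ∈ F ∧ x.length = n) ∧ (y ∈ F ∧ y.length = n) := by
  induction h with
  | nil hx hl => exact ⟨⟨hx, hl⟩, hx, hl⟩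
  | @fwd p g b hw hpb ih =>
    refine ⟨ih.1, hFac _ hpb _ (List.drop_suffix _ _).isInfix, ?_⟩
    simp [ih.2.2]
  | @bwd q g b hw hqb ih =>
    refine ⟨ih.1, hFac _ hqb _ (List.prefix_append _ _).isInfix, ?_⟩
    have := ih.2.2
    simpa using this

lemma GWalk.comp {x y z g h} (h1 : GWalk F n x y g) (h2 : GWalk F n y z h) :
    GWalk F n x z (g * h) := by
  induction h2 with
  | nil _ _ => exact h1.cast (mul_one g).symm
  | fwd b hw hpb ih => exact (GWalk.fwd b ih hpb).cast (mul_assoc _ _ _)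
  | bwd b hw hqb ih => exact (GWalk.bwd b ih hqb).cast (mul_assoc _ _ _)

lemma GWalk.inv (hFac : Factorial F) {x y g} (h : GWalk F n x y g) :
    GWalk F n y x g⁻¹ := by
  induction h with
  | nil hx hl => exact (GWalk.nil _ hx hl).cast (by simp)
  | @fwd p g b hw hpb ih =>
    have hl : ((p ++ [b]).drop 1).length = n := by
      have := (hw.ends hFac).2.2; simp [this]
    have h0 : GWalk F n ((p ++ [b]).drop 1) ((p ++ [b]).drop 1) 1 :=
      GWalk.nil _ (hFac _ hpb _ (List.drop_suffix _ _).isInfix) hl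
    have h1 : GWalk F n ((p ++ [b]).drop 1) p (1 * (FreeGroup.of b)⁻¹) :=
      GWalk.bwd b h0 hpb
    exact (h1.comp ih).cast (by group)
  | @bwd q g b hw hqb ih =>
    have hl : q.length = n := by
      have := (hw.ends hFac).2.2; simpa using this
    have h0 : GWalk F n q q 1 :=
      GWalk.nil _ (hFac _ hqb _ (List.prefix_append _ _).isInfix) hl
    have h1 : GWalk F n q ((q ++ [b]).drop 1) (1 * FreeGroup.of b) :=
      GWalk.fwd b h0 hqb
    exact (h1.comp ih).cast (by group)

/-- every nonempty word of a recurrent set extends on the left. -/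
lemma exists_cons (hR : Recurrent F) {w : List A} (hw : w ∈ F) (hne : w ≠ []) :
    ∃ a, a :: w ∈ F := by
  obtain ⟨z, hz⟩ := hR.2.2.2 w hw w hw
  have hne2 : w ++ z ≠ [] := by simp [hne]
  refine ⟨(w ++ z).getLast hne2, hR.1 _ hz _ ?_⟩
  refine ⟨(w ++ z).dropLast, [], ?_⟩
  have h := List.dropLast_append_getLast hne2
  calc (w ++ z).dropLast ++ ((w ++ z).getLast hne2 :: w) ++ []
      = ((w ++ z).dropLast ++ [(w ++ z).getLast hne2]) ++ w := by simp
    _ = w ++ z ++ w := by rw [h]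

/-- vertex positions in the Rauzy graph of order `|p|+1` -/
def pos (p : List A) : Sum A A → List A := Sum.elim (fun a => a :: p) (fun b => p ++ [b])

def lab : Sum A A → FreeGroup A := Sum.elim (fun _ => 1) (fun b => FreeGroup.of b)

lemma connect_aux (hConn : ConnectedSet F) {p : List A} (hp : p ∈ F) (hn : p.length = n)
    (z z' : {x : Sum A A // ExtVertex F p x}) :
    GWalk F (n + 1) (pos p z.1) (pos p z'.1) ((lab z.1)⁻¹ * lab z'.1) := by
  obtain ⟨W⟩ := (hConn p hp).preconnected z z'
  induction W with
  | nil =>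
    rename_i zz
    have hmem : pos p zz.1 ∈ F ∧ (pos p zz.1).length = n + 1 := by
      obtain ⟨(a | b), hv⟩ := zz
      · exact ⟨hv, by simp [pos, hn]⟩
      · exact ⟨hv, by simp [pos, hn]⟩
    exact (GWalk.nil _ hmem.1 hmem.2).cast (inv_mul_cancel _).symm
  | @cons z₀ z₁ z₂ hadj W ih =>
    have hedge : GWalk F (n + 1) (pos p z₀.1) (pos p z₁.1) ((lab z₀.1)⁻¹ * lab z₁.1) := by
      rw [extGraph, SimpleGraph.fromRel_adj] at hadj
      obtain ⟨hne, hrel⟩ := hadj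
      obtain ⟨a | b, hv0'⟩ := z₀ <;> obtain ⟨a' | b', hv1'⟩ := z₁
      all_goals simp only [ExtRel] at hrel
      · exact absurd hrel (by simp)
      · -- inl a, inr b' : forward edge
        have hrel' : (a :: p) ++ [b'] ∈ F := by
          rcases hrel with h | h
          · exact h
          · exact h.elim
        have hstep : GWalk F (n + 1) (a :: p) (((a :: p) ++ [b']).drop 1) (1 * FreeGroup.of b') :=
          GWalk.fwd b' (GWalk.nil _ hv0' (by simp [hn])) hrel'
        have hstep' : GWalk F (n + 1) (a :: p) (p ++ [b']) (1 * FreeGroup.of b') := hstep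
        exact hstep'.cast (by simp [lab, pos])
      · -- inr b, inl a' : backward edge
        have hrel' : (a' :: p) ++ [b] ∈ F := by
          rcases hrel with h | h
          · exact h.elim
          · exact h
        have h0 : GWalk F (n + 1) (((a' :: p) ++ [b]).drop 1) (((a' :: p) ++ [b]).drop 1) 1 :=
          GWalk.nil _ (show p ++ [b] ∈ F from hv0') (by simp [hn])
        have hstep : GWalk F (n + 1) (((a' :: p) ++ [b]).drop 1) (a' :: p)
            (1 * (FreeGroup.of b)⁻¹) := GWalk.bwd b h0 hrel'
        have hstep' : GWalk F (n + 1) (p ++ [b]) (a' :: p) (1 * (FreeGroup.of b)⁻¹) := hstep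
        exact hstep'.cast (by simp [lab, pos])
      · exact absurd hrel (by simp)
    exact (hedge.comp ih).cast (by group)

lemma connectL (hConn : ConnectedSet F) {p : List A} (hp : p ∈ F) (hn : p.length = n)
    {a c : A} (ha : a :: p ∈ F) (hc : c :: p ∈ F) :
    GWalk F (n + 1) (a :: p) (c :: p) 1 := by
  have := connect_aux hConn hp hn
    ⟨Sum.inl a, ha⟩ ⟨Sum.inl c, hc⟩
  exact this.cast (by simp [lab])

lemma GWalk.castEnd {x y y' : List A} {g : FreeGroup A} (h : GWalk F n x y g) (e : y = y') :
    GWalk F n x y' g := e ▸ h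

/-- Lifting walks from level `n` to level `n+1`. -/
lemma lift (hR : Recurrent F) (hConn : ConnectedSet F) {v v' : List A} {g : FreeGroup A}
    (h : GWalk F n v v' g) :
    ∀ a, a :: v ∈ F → ∃ c, c :: v' ∈ F ∧ GWalk F (n + 1) (a :: v) (c :: v') g := by
  have hFac := hR.1
  induction h with
  | nil hx hl =>
    intro a ha
    exact ⟨a, ha, GWalk.nil _ ha (by simp [hl])⟩
  | @fwd p g b hw hpb ih =>
    intro a ha
    obtain ⟨c, hc, hwalk⟩ := ih a ha
    obtain ⟨d, hd⟩ := exists_cons hR hpb (by simp)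
    have hdp : d :: p ∈ F := hFac _ hd _ ⟨[], [b], by simp⟩
    have hp := (hw.ends hFac).2
    have hcon : GWalk F (n + 1) (c :: p) (d :: p) 1 := connectL hConn hp.1 hp.2 hc hdp
    have hstep : GWalk F (n + 1) (d :: p) (((d :: p) ++ [b]).drop 1) (1 * FreeGroup.of b) :=
      GWalk.fwd b (GWalk.nil _ hdp (by simp [hp.2])) (show (d :: p) ++ [b] ∈ F from hd)
    have hne : p ++ [b] ≠ [] := by simp
    have hsplit : (p ++ [b]).head hne :: ((p ++ [b]).drop 1) = p ++ [b] := by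
      rw [List.drop_one]; exact List.cons_head_tail hne
    have combined : GWalk F (n + 1) (a :: v) (p ++ [b]) ((g * 1) * (1 * FreeGroup.of b)) :=
      (hwalk.comp hcon).comp hstep
    refine ⟨(p ++ [b]).head hne, ?_, ?_⟩
    · rw [hsplit]; exact hpb
    · exact ((combined.castEnd hsplit.symm).cast (by group))
  | @bwd q g b hw hqb ih =>
    intro a ha
    obtain ⟨c, hc, hwalk⟩ := ih a ha
    obtain ⟨d, hd⟩ := exists_cons hR hqb (by simp)
    have hs := (hw.ends hFac).2
    have hne : q ++ [b] ≠ [] := by simp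
    have hsplit : (q ++ [b]).head hne :: ((q ++ [b]).drop 1) = q ++ [b] := by
      rw [List.drop_one]; exact List.cons_head_tail hne
    have hheadF : (q ++ [b]).head hne :: ((q ++ [b]).drop 1) ∈ F := by rw [hsplit]; exact hqb
    have hcon : GWalk F (n + 1) (c :: ((q ++ [b]).drop 1))
        ((q ++ [b]).head hne :: ((q ++ [b]).drop 1)) 1 :=
      connectL hConn hs.1 hs.2 hc hheadF
    have hql : q.length = n := by have := hs.2; simpa using this
    have hnil : GWalk F (n + 1) (q ++ [b]) (q ++ [b]) 1 :=
      GWalk.nil _ hqb (by simp [hql])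
    have hnil' : GWalk F (n + 1) (q ++ [b]) (((d :: q) ++ [b]).drop 1) 1 := hnil
    have hstep : GWalk F (n + 1) (q ++ [b]) (d :: q) (1 * (FreeGroup.of b)⁻¹) :=
      GWalk.bwd b hnil' (show (d :: q) ++ [b] ∈ F from hd)
    have hdq : d :: q ∈ F := hFac _ hd _ ⟨[], [b], by simp⟩
    refine ⟨d, hdq, ?_⟩
    have combined : GWalk F (n + 1) (a :: v) (d :: q) ((g * 1) * (1 * (FreeGroup.of b)⁻¹)) :=
      ((hwalk.comp hcon).castEnd hsplit).comp hstep
    exact combined.cast (by group)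

/-- All loop labels are realized at every vertex: the group of the Rauzy graph
of a connected set is the whole free group. -/
lemma claimA (hR : Recurrent F) (hConn : ConnectedSet F) (hAlph : AlphabetIs F) :
    ∀ n, ∀ x ∈ F, x.length = n → ∀ g : FreeGroup A, GWalk F n x x g := by
  have hFac := hR.1
  intro n
  induction n with
  | zero =>
    intro x hx hl g
    have hx0 : x = [] := List.eq_nil_of_length_eq_zero hl
    subst hx0
    refine FreeGroup.induction_on g ?_ ?_ ?_ ?_
    · exact GWalk.nil [] hx rfl
    · intro a
      have h : GWalk F 0 [] (([] ++ [a] : List A).drop 1) (1 * FreeGroup.of a) :=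
        GWalk.fwd a (GWalk.nil [] hx rfl) (by simpa using hAlph a)
      exact (show GWalk F 0 [] [] (1 * FreeGroup.of a) from h).cast (one_mul _)
    · intro a _
      have h0 : GWalk F 0 [] (([] ++ [a] : List A).drop 1) 1 := GWalk.nil [] hx rfl
      have h : GWalk F 0 [] [] (1 * (FreeGroup.of a)⁻¹) :=
        GWalk.bwd a h0 (by simpa using hAlph a)
      exact h.cast (one_mul _)
    · intro g h hg hh
      exact hg.comp hh
  | succ n ihn =>
    intro x hx hl g
    have hxne : x ≠ [] := by intro h; rw [h] at hl; simp at hl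
    have hv : x.tail ∈ F := hFac x hx _ (List.tail_suffix x).isInfix
    have hvl : x.tail.length = n := by
      rw [List.length_tail, hl]; rfl
    have hsplit : x.head hxne :: x.tail = x := List.cons_head_tail hxne
    have hhead : x.head hxne :: x.tail ∈ F := by rw [hsplit]; exact hx
    obtain ⟨c, hc, hwalk⟩ := lift hR hConn (ihn x.tail hv hvl g) (x.head hxne) hhead
    have hcon : GWalk F (n + 1) (c :: x.tail) (x.head hxne :: x.tail) 1 :=
      connectL hConn hv hvl hc hhead
    have final : GWalk F (n + 1) (x.head hxne :: x.tail) (x.head hxne :: x.tail) g :=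
      (hwalk.comp hcon).cast (mul_one g)
    exact hsplit ▸ final

/-! ### Occurrences and return words -/

lemma suffix_eq_suffix {s t m : List A} (hs : s <:+ m) (ht : t <:+ m)
    (h : s.length = t.length) : s = t := by
  obtain ⟨c1, h1⟩ := hs
  obtain ⟨c2, h2⟩ := ht
  have hlen : c1.length = c2.length := by
    have e1 := congrArg List.length h1
    have e2 := congrArg List.length h2
    simp only [List.length_append] at e1 e2
    omega
  exact List.append_inj_right (h1.trans h2.symm) hlen

lemma suffix_of_suffix_length_le {s t m : List A} (hs : s <:+ m) (ht : t <:+ m)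
    (h : s.length ≤ t.length) : s <:+ t := by
  obtain ⟨c1, h1⟩ := hs
  obtain ⟨c2, h2⟩ := ht
  have hc2 : c2 <+: c1 := by
    refine List.prefix_of_prefix_length_le ⟨t, h2⟩ ⟨s, h1⟩ ?_
    have e1 := congrArg List.length h1
    have e2 := congrArg List.length h2
    simp only [List.length_append] at e1 e2
    omega
  obtain ⟨d, hd⟩ := hc2
  refine ⟨d, ?_⟩
  have : c2 ++ (d ++ s) = c2 ++ t := by
    rw [← List.append_assoc, hd, h1, h2]
  exact List.append_cancel_left this

lemma suffix_append_cancel {s v t : List A} (h : s ++ t <:+ v ++ t) : s <:+ v := by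
  obtain ⟨c, hc⟩ := h
  refine ⟨c, ?_⟩
  have : (c ++ s) ++ t = v ++ t := by rw [List.append_assoc, hc]
  exact List.append_cancel_right this

open Classical in
/-- The suffix of `m` following the last occurrence of `u` in `m`. -/
noncomputable def Ysuf (u m : List A) : List A :=
  m.drop (Nat.findGreatest (fun j => u ++ m.drop j <:+ m) m.length)

lemma Ysuf_suffix (u m : List A) : Ysuf u m <:+ m := List.drop_suffix _ _

open Classical in
lemma Ysuf_min (u : List A) {m y : List A} (hy : u ++ y <:+ m) :
    (Ysuf u m).length ≤ y.length := by
  classical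
  have hym : y <:+ m := (List.suffix_append u y).trans hy
  obtain ⟨c, hc⟩ := hym
  have hdc : m.drop c.length = y := by rw [← hc, List.drop_left]
  have hcl : c.length + y.length = m.length := by
    have := congrArg List.length hc; simpa using this
  have hP : u ++ m.drop c.length <:+ m := by rw [hdc]; exact hy
  have hle : c.length ≤ Nat.findGreatest (fun j => u ++ m.drop j <:+ m) m.length :=
    Nat.le_findGreatest (by omega) hP
  have hfg : Nat.findGreatest (fun j => u ++ m.drop j <:+ m) m.length ≤ m.length :=
    Nat.findGreatest_le _
  have : (Ysuf u m).length = m.length - Nat.findGreatest (fun j => u ++ m.drop j <:+ m) m.length := by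
    simp [Ysuf]
  omega

open Classical in
lemma Ysuf_occ (u : List A) {m : List A} (hm : u <:+: m) : u ++ Ysuf u m <:+ m := by
  obtain ⟨s, t, hst⟩ := hm
  have ht : u ++ t <:+ m := ⟨s, by rw [← List.append_assoc, hst]⟩
  have hym : t <:+ m := (List.suffix_append u t).trans ht
  obtain ⟨c, hc⟩ := hym
  have hdc : m.drop c.length = t := by rw [← hc, List.drop_left]
  have hcl : c.length ≤ m.length := by
    have := congrArg List.length hc; simp at this; omega
  have hP : u ++ m.drop c.length <:+ m := by rw [hdc]; exact ht
  have := Nat.findGreatest_spec (P := fun j => u ++ m.drop j <:+ m) hcl hP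
  simpa [Ysuf] using this

lemma Ysuf_eq (u : List A) {m y : List A} (hy : u ++ y <:+ m)
    (hlen : y.length ≤ (Ysuf u m).length) : y = Ysuf u m := by
  have hym : y <:+ m := (List.suffix_append u y).trans hy
  exact suffix_eq_suffix hym (Ysuf_suffix u m) (le_antisymm hlen (Ysuf_min u hy))

variable (u : List A)

/-- The subgroup generated by the canonical images of the return words. -/
noncomputable def retSubgroup (F : Set (List A)) (u : List A) : Subgroup (FreeGroup A) :=
  Subgroup.closure ((fun w : List A => (w.map FreeGroup.of).prod) '' ReturnWords F u)

/-- Key lemma: for any occurrence-suffix `y` of `u` in `m ∈ F`, the element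
`fg y * (fg (Ysuf u m))⁻¹` is a product of return words. -/
lemma phi_occ_mem (hFac : Factorial F) {m : List A} (hmF : m ∈ F) :
    ∀ y, u ++ y <:+ m → fg y * (fg (Ysuf u m))⁻¹ ∈ retSubgroup F u := by
  classical
  suffices H : ∀ k, ∀ y : List A, y.length ≤ k → u ++ y <:+ m →
      fg y * (fg (Ysuf u m))⁻¹ ∈ retSubgroup F u by
    intro y hy; exact H y.length y le_rfl hy
  intro k
  induction k with
  | zero =>
    intro y hk hy
    have h0 : (Ysuf u m).length ≤ y.length := Ysuf_min u hy
    have := Ysuf_eq u hy (by omega)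
    rw [this, mul_inv_cancel]
    exact one_mem _
  | succ k IH =>
    intro y hk hy
    by_cases hle : y.length ≤ (Ysuf u m).length
    · rw [Ysuf_eq u hy hle, mul_inv_cancel]
      exact one_mem _
    push_neg at hle
    -- witnesses for the occurrence `y` and for `Ysuf u m`
    have hym : y <:+ m := (List.suffix_append u y).trans hy
    obtain ⟨c, hc⟩ := hym
    have hdc : m.drop c.length = y := by
      conv_lhs => rw [← hc]
      exact List.drop_left
    obtain ⟨cu, hcu⟩ := id hy
    have hYs : Ysuf u m <:+ m := Ysuf_suffix u m
    obtain ⟨c0, hc0⟩ := hYs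
    have hlc : c.length + y.length = m.length := by
      have := congrArg List.length hc; simpa using this
    have hlc0 : c0.length + (Ysuf u m).length = m.length := by
      have := congrArg List.length hc0; simpa using this
    have hcc0 : c.length < c0.length := by omega
    have hYocc : u ++ Ysuf u m <:+ m :=
      Ysuf_occ u ⟨cu, y, by rw [List.append_assoc]; exact hcu⟩
    -- the next occurrence after position `c.length`
    have hQ0 : (u ++ m.drop c0.length <:+ m) ∧ c.length < c0.length := by
      constructor
      · have e : m.drop c0.length = Ysuf u m := by
          conv_lhs => rw [← hc0]
          exact List.drop_left
        rw [e]; exact hYocc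
      · exact hcc0
    have hex : ∃ j, (u ++ m.drop j <:+ m) ∧ c.length < j := ⟨c0.length, hQ0⟩
    obtain ⟨hyo', hcj⟩ := Nat.find_spec hex
    have hj'le : Nat.find hex ≤ c0.length := Nat.find_min' hex hQ0
    have hj'm : Nat.find hex ≤ m.length := by omega
    have hy'len : (m.drop (Nat.find hex)).length = m.length - Nat.find hex := by simp
    have hyy' : m.drop (Nat.find hex) = y.drop (Nat.find hex - c.length) := by
      conv_rhs => rw [← hdc, List.drop_drop]
      congr 1
      omega
    have hry : y.take (Nat.find hex - c.length) ++ m.drop (Nat.find hex) = y := by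
      rw [hyy']; exact List.take_append_drop _ _
    have hylen' : (m.drop (Nat.find hex)).length < y.length := by
      rw [hy'len]; omega
    have hrne : y.take (Nat.find hex - c.length) ≠ [] := by
      intro h
      rw [h, List.nil_append] at hry
      rw [hry] at hylen'
      omega
    have h1 : u ++ m.drop (Nat.find hex) <:+ u ++ y :=
      suffix_of_suffix_length_le hyo' hy (by simp only [List.length_append]; omega)
    have h2 : u <:+ u ++ y.take (Nat.find hex - c.length) := by
      have h1' : u ++ m.drop (Nat.find hex) <:+
          (u ++ y.take (Nat.find hex - c.length)) ++ m.drop (Nat.find hex) := by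
        rw [List.append_assoc, hry]; exact h1
      exact suffix_append_cancel h1'
    have hurF : u ++ y.take (Nat.find hex - c.length) ∈ F := by
      refine hFac m hmF _ ⟨cu, m.drop (Nat.find hex), ?_⟩
      calc (cu ++ (u ++ y.take (Nat.find hex - c.length))) ++ m.drop (Nat.find hex)
          = cu ++ (u ++ (y.take (Nat.find hex - c.length) ++ m.drop (Nat.find hex))) := by
            simp [List.append_assoc]
        _ = m := by rw [hry]; exact hcu
    have hnint : ¬ ∃ x'' y'' : List A, x'' ≠ [] ∧ y'' ≠ [] ∧
        u ++ y.take (Nat.find hex - c.length) = x'' ++ u ++ y'' := by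
      rintro ⟨x'', y'', hx'', hy'', heq⟩
      have hlr : u.length + (Nat.find hex - c.length) ⊓ y.length =
          x''.length + (u.length + y''.length) := by
        have := congrArg List.length heq; simpa using this
      have hx''pos : 0 < x''.length := List.length_pos_iff.mpr hx''
      have hy''pos : 0 < y''.length := List.length_pos_iff.mpr hy''
      have hrlen : (Nat.find hex - c.length) ⊓ y.length = Nat.find hex - c.length := by
        omega
      have hz : u ++ (y'' ++ m.drop (Nat.find hex)) <:+ m := by
        have e : x'' ++ (u ++ (y'' ++ m.drop (Nat.find hex))) = u ++ y := by
          calc x'' ++ (u ++ (y'' ++ m.drop (Nat.find hex)))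
              = (x'' ++ u ++ y'') ++ m.drop (Nat.find hex) := by simp [List.append_assoc]
            _ = (u ++ y.take (Nat.find hex - c.length)) ++ m.drop (Nat.find hex) := by
                rw [← heq]
            _ = u ++ y := by rw [List.append_assoc, hry]
        have h3 : u ++ (y'' ++ m.drop (Nat.find hex)) <:+
            x'' ++ (u ++ (y'' ++ m.drop (Nat.find hex))) := List.suffix_append _ _
        rw [e] at h3
        exact h3.trans hy
      have hzm : y'' ++ m.drop (Nat.find hex) <:+ m := (List.suffix_append u _).trans hz
      obtain ⟨cz, hcz⟩ := hzm
      have hczl : cz.length + (y''.length + (m.drop (Nat.find hex)).length) = m.length := by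
        have := congrArg List.length hcz; simpa using this
      have hdz : m.drop cz.length = y'' ++ m.drop (Nat.find hex) := by
        conv_lhs => rw [← hcz]
        exact List.drop_left
      have hjz1 : c.length < cz.length := by omega
      have hjz2 : cz.length < Nat.find hex := by omega
      exact Nat.find_min hex hjz2 ⟨by rw [hdz]; exact hz, hjz1⟩
    have hrR : y.take (Nat.find hex - c.length) ∈ ReturnWords F u := ⟨hrne, hurF, h2, hnint⟩
    have ihy' := IH (m.drop (Nat.find hex)) (by omega) hyo'
    have hsplitg : fg y * (fg (Ysuf u m))⁻¹ =
        fg (y.take (Nat.find hex - c.length)) *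
          (fg (m.drop (Nat.find hex)) * (fg (Ysuf u m))⁻¹) := by
      rw [← mul_assoc, ← fg_append, hry]
    rw [hsplitg]
    exact mul_mem (Subgroup.subset_closure ⟨_, hrR, rfl⟩) ihy'

/-- The label of any walk at level `n ≥ N` is, up to the boundary correction,
in the return-word subgroup. -/
lemma claimC (hFac : Factorial F) {N : ℕ} (hN : ∀ w ∈ F, N ≤ w.length → u <:+: w)
    (hnN : N ≤ n) {x y : List A} {g : FreeGroup A} (h : GWalk F n x y g) :
    fg (Ysuf u x) * g * (fg (Ysuf u y))⁻¹ ∈ retSubgroup F u := by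
  induction h with
  | nil hx hl =>
    rw [mul_one, mul_inv_cancel]
    exact one_mem _
  | @fwd p g b hw hpb ih =>
    have hp := (hw.ends hFac).2
    have hsF : (p ++ [b]).drop 1 ∈ F := hFac _ hpb _ (List.drop_suffix _ _).isInfix
    have hsl : ((p ++ [b]).drop 1).length = n := by simp [hp.2]
    have hup : u <:+: p := hN p hp.1 (hp.2 ▸ hnN)
    have hus : u <:+: (p ++ [b]).drop 1 := hN _ hsF (hsl ▸ hnN)
    have hocc1 : u ++ (Ysuf u p ++ [b]) <:+ p ++ [b] := by
      obtain ⟨c, hc⟩ := Ysuf_occ u hup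
      refine ⟨c, ?_⟩
      calc c ++ (u ++ (Ysuf u p ++ [b])) = (c ++ (u ++ Ysuf u p)) ++ [b] := by
            simp [List.append_assoc]
        _ = p ++ [b] := by rw [hc]
    have hD1 := phi_occ_mem u hFac hpb _ hocc1
    have hocc2 : u ++ Ysuf u ((p ++ [b]).drop 1) <:+ p ++ [b] :=
      (Ysuf_occ u hus).trans (List.drop_suffix 1 (p ++ [b]))
    have hD2 := phi_occ_mem u hFac hpb _ hocc2
    have key : fg (Ysuf u x) * (g * FreeGroup.of b) * (fg (Ysuf u ((p ++ [b]).drop 1)))⁻¹ =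
        (fg (Ysuf u x) * g * (fg (Ysuf u p))⁻¹) *
          ((fg (Ysuf u p ++ [b]) * (fg (Ysuf u (p ++ [b])))⁻¹) *
            (fg (Ysuf u ((p ++ [b]).drop 1)) * (fg (Ysuf u (p ++ [b])))⁻¹)⁻¹) := by
      rw [fg_append, fg_singleton]; group
    rw [key]
    exact mul_mem ih (mul_mem hD1 (inv_mem hD2))
  | @bwd q g b hw hqb ih =>
    have hs := (hw.ends hFac).2
    have hql : q.length = n := by have := hs.2; simpa using this
    have hqF : q ∈ F := hFac _ hqb _ (List.prefix_append _ _).isInfix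
    have huq : u <:+: q := hN q hqF (hql ▸ hnN)
    have hus : u <:+: (q ++ [b]).drop 1 := hN _ hs.1 (hs.2 ▸ hnN)
    have hocc1 : u ++ (Ysuf u q ++ [b]) <:+ q ++ [b] := by
      obtain ⟨c, hc⟩ := Ysuf_occ u huq
      refine ⟨c, ?_⟩
      calc c ++ (u ++ (Ysuf u q ++ [b])) = (c ++ (u ++ Ysuf u q)) ++ [b] := by
            simp [List.append_assoc]
        _ = q ++ [b] := by rw [hc]
    have hD1 := phi_occ_mem u hFac hqb _ hocc1
    have hocc2 : u ++ Ysuf u ((q ++ [b]).drop 1) <:+ q ++ [b] :=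
      (Ysuf_occ u hus).trans (List.drop_suffix 1 (q ++ [b]))
    have hD2 := phi_occ_mem u hFac hqb _ hocc2
    have key : fg (Ysuf u x) * (g * (FreeGroup.of b)⁻¹) * (fg (Ysuf u q))⁻¹ =
        (fg (Ysuf u x) * g * (fg (Ysuf u ((q ++ [b]).drop 1)))⁻¹) *
          ((fg (Ysuf u ((q ++ [b]).drop 1)) * (fg (Ysuf u (q ++ [b])))⁻¹) *
            (fg (Ysuf u q ++ [b]) * (fg (Ysuf u (q ++ [b])))⁻¹)⁻¹) := by
      rw [fg_append, fg_singleton]; group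
    rw [key]
    exact mul_mem ih (mul_mem hD2 (inv_mem hD1))

end ReturnProofAux

open PaperDefs in
theorem stmt_12 {A : Type} [Fintype A]
    (F : Set (List A)) (hF : UniformlyRecurrent F)
    (hConn : ConnectedSet F) (hAlph : AlphabetIs F)
    (u : List A) (hu : u ∈ F) :
    Subgroup.closure
      ((fun w : List A => (w.map (FreeGroup.of)).prod) '' ReturnWords F u) = ⊤ := by
    classical
  rw [Subgroup.eq_top_iff']
  intro g
  cases isEmpty_or_nonempty A with
  | inl hA =>
    have hg1 : g = 1 :=
      FreeGroup.induction_on g rfl (fun x => isEmptyElim x)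
        (fun x hx => by rw [hx, inv_one]) (fun x y hx hy => by rw [hx, hy, one_mul])
    rw [hg1]; exact one_mem _
  | inr hA =>
    have hR := hF.1
    have hFac := hR.1
    obtain ⟨N, hN⟩ := hF.2 u hu
    obtain ⟨w₀, hw₀F, hw₀s, hw₀ne⟩ : ∃ w₀, w₀ ∈ F ∧ u <:+ w₀ ∧ w₀ ≠ [] := by
      by_cases hu0 : u = []
      · exact ⟨[Classical.arbitrary A], hAlph _, by simp [hu0], by simp⟩
      · exact ⟨u, hu, List.suffix_rfl, hu0⟩
    have hw₀pos : 0 < w₀.length := List.length_pos_iff.mpr hw₀ne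
    have hext : ∀ k, ∃ x, x ∈ F ∧ u <:+ x ∧ x.length = w₀.length + k := by
      intro k
      induction k with
      | zero => exact ⟨w₀, hw₀F, hw₀s, rfl⟩
      | succ k ih =>
        obtain ⟨x, hxF, hxs, hxl⟩ := ih
        have hxne : x ≠ [] := by
          intro h; rw [h] at hxl; simp at hxl; omega
        obtain ⟨a, ha⟩ := ReturnProofAux.exists_cons hR hxF hxne
        exact ⟨a :: x, ha, hxs.trans (List.suffix_cons a x), by rw [List.length_cons, hxl]; omega⟩
    obtain ⟨x, hxF, hxs, hxl⟩ := hext (max N w₀.length - w₀.length)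
    have hxn : x.length = max N w₀.length := by
      have h1 : w₀.length ≤ max N w₀.length := le_max_right _ _
      omega
    have hwalk := ReturnProofAux.claimA hR hConn hAlph (max N w₀.length) x hxF hxn g
    have hC := ReturnProofAux.claimC u hFac hN (le_max_left _ _) hwalk
    have hocc : u ++ [] <:+ x := by simpa using hxs
    have hY : ReturnProofAux.Ysuf u x = [] := by
      have h0 := ReturnProofAux.Ysuf_min u hocc
      exact List.eq_nil_of_length_eq_zero (Nat.le_zero.mp (by simpa using h0))
    rw [hY] at hC
    simpa [ReturnProofAux.retSubgroup, ReturnProofAux.fg] using hC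
end
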